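/- arXiv:math/0612391 — 3 statements merged into one kernel-verified Lean document; each statement's English description precedes it below -/
import Mathlib

section
/- Let H be a finite connected simple graph which contains a triangle, let u be a vertex of H, and let M be a finite unicyclic simple graph with unique cycle C. Let r ≥ |V(H)| + 3 and let U be the set of vertices of M at distance exactly r from (the vertex set of) C. Then there is a graph homomorphism h from M to H such that h(w) = u for every w in U. -/
open SimpleGraph

/-- A finite simple graph is unicyclic: it contains exactly one cycle, where
cycles are identified up to starting vertex and direction (equivalently, by
their edge sets). -/
def GraphUnicyclic {V : Type} (G : SimpleGraph V) : Prop :=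
  (∃ (u : V) (c : G.Walk u u), c.IsCycle) ∧
  ∀ (u v : V) (c : G.Walk u u) (c' : G.Walk v v), c.IsCycle → c'.IsCycle →
    ∀ e, e ∈ c.edges ↔ e ∈ c'.edges

/-- A triangle in a graph: three pairwise adjacent vertices. -/
def HasTriangle {W : Type} (H : SimpleGraph W) : Prop :=
  ∃ a b c : W, H.Adj a b ∧ H.Adj b c ∧ H.Adj a c

/-- The vertex `w` is at distance exactly `r` from (the vertex set of) the
cycle `c`: there is a walk of length `r` from `w` to a vertex of `c`, and
every walk from `w` to a vertex of `c` has length at least `r`. -/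
def DistToCycleEq {V : Type} {M : SimpleGraph V} {x : V} (c : M.Walk x x)
    (w : V) (r : ℕ) : Prop :=
  (∃ y ∈ c.support, ∃ p : M.Walk w y, p.length = r) ∧
  (∀ y ∈ c.support, ∀ p : M.Walk w y, r ≤ p.length)

namespace Stmt6Aux

open SimpleGraph Walk

attribute [local instance] Classical.propDecidable

variable {V : Type} {M : SimpleGraph V} {x : V}

lemma getVert_support_get {u v : V} (p : M.Walk u v) {i : ℕ} (hi : i ≤ p.length) :
    p.support[i]? = some (p.getVert i) := by
  induction p generalizing i with
  | nil =>
    simp only [Walk.length_nil, Nat.le_zero] at hi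
    subst hi
    simp [Walk.support_nil, Walk.getVert_zero]
  | cons h q ih =>
    cases i with
    | zero => simp [Walk.support_cons, Walk.getVert_zero]
    | succ n =>
      rw [Walk.support_cons]
      rw [Walk.length_cons] at hi
      simpa [Walk.getVert_cons_succ] using ih (by omega)

lemma getVert_mem_support {u v : V} (p : M.Walk u v) (i : ℕ) :
    p.getVert i ∈ p.support := by
  rcases le_or_gt i p.length with h | h
  · rw [Walk.mem_support_iff_exists_getVert]
    exact ⟨i, rfl, h⟩
  · rw [p.getVert_of_length_le h.le]
    exact Walk.end_mem_support p

lemma mem_edges_getVert {u v a b : V} {p : M.Walk u v} (h : s(a, b) ∈ p.edges) :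
    ∃ i < p.length, (p.getVert i = a ∧ p.getVert (i+1) = b) ∨
      (p.getVert i = b ∧ p.getVert (i+1) = a) := by
  induction p with
  | nil => simp at h
  | cons hadj q ih =>
    rw [Walk.edges_cons, List.mem_cons] at h
    rcases h with h | h
    · refine ⟨0, by simp [Walk.length_cons], ?_⟩
      rw [Sym2.eq_iff] at h
      rcases h with ⟨h1, h2⟩ | ⟨h1, h2⟩
      · left; subst h1; subst h2; simp [Walk.getVert_zero, Walk.getVert_cons_succ]
      · right; subst h1; subst h2; simp [Walk.getVert_zero, Walk.getVert_cons_succ]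
    · obtain ⟨i, hi, hcase⟩ := ih h
      refine ⟨i + 1, by rw [Walk.length_cons]; omega, ?_⟩
      simpa [Walk.getVert_cons_succ] using hcase

lemma cycle_getVert_inj {c : M.Walk x x} (hc : c.IsCycle) {i j : ℕ}
    (hi : i < c.length) (hj : j < c.length) (hij : c.getVert i = c.getVert j) : i = j := by
  have hnd : c.support.tail.Nodup := hc.support_nodup
  have hlen : c.support.tail.length = c.length := by
    have := c.length_support
    simp [List.length_tail, this]
  have htail : ∀ k, k + 1 ≤ c.length → c.support.tail[k]? = some (c.getVert (k+1)) := by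
    intro k hk
    have h0 := getVert_support_get c (i := k + 1) hk
    rw [c.support_eq_cons, List.getElem?_cons_succ] at h0
    exact h0
  have hL3 : 3 ≤ c.length := hc.three_le_length
  rcases Nat.eq_zero_or_pos i with hi0 | hipos
  · rcases Nat.eq_zero_or_pos j with hj0 | hjpos
    · omega
    · exfalso
      subst hi0
      rw [Walk.getVert_zero] at hij
      have hj1 : j - 1 + 1 = j := by omega
      have h1 : c.support.tail[j-1]? = some x := by
        have h := htail (j-1) (by omega)
        rw [hj1] at h
        rw [h, ← hij]
      have hLL : c.length - 1 + 1 = c.length := by omega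
      have h2 : c.support.tail[c.length-1]? = some x := by
        have h := htail (c.length-1) (by omega)
        rw [hLL] at h
        rw [h, Walk.getVert_length]
      have h12 : c.support.tail[j-1]? = c.support.tail[c.length-1]? := by rw [h1, h2]
      have := (List.getElem?_inj (l := c.support.tail) (by omega) hnd).mp h12
      omega
  · rcases Nat.eq_zero_or_pos j with hj0 | hjpos
    · exfalso
      subst hj0
      rw [Walk.getVert_zero] at hij
      have hi1 : i - 1 + 1 = i := by omega
      have h1 : c.support.tail[i-1]? = some x := by
        have h := htail (i-1) (by omega)
        rw [hi1] at h
        rw [h, hij]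
      have hLL : c.length - 1 + 1 = c.length := by omega
      have h2 : c.support.tail[c.length-1]? = some x := by
        have h := htail (c.length-1) (by omega)
        rw [hLL] at h
        rw [h, Walk.getVert_length]
      have h12 : c.support.tail[i-1]? = c.support.tail[c.length-1]? := by rw [h1, h2]
      have := (List.getElem?_inj (l := c.support.tail) (by omega) hnd).mp h12
      omega
    · have h1 := htail (i-1) (by omega)
      have h2 := htail (j-1) (by omega)
      have hi1 : i - 1 + 1 = i := by omega
      have hj1 : j - 1 + 1 = j := by omega
      rw [hi1] at h1
      rw [hj1] at h2
      have h12 : c.support.tail[i-1]? = c.support.tail[j-1]? := by rw [h1, h2, hij]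
      have := (List.getElem?_inj (l := c.support.tail) (by omega) hnd).mp h12
      omega

lemma cycle_exists_idx {c : M.Walk x x} (hc : c.IsCycle) {v : V} (hv : v ∈ c.support) :
    ∃ i, i < c.length ∧ c.getVert i = v := by
  rw [Walk.mem_support_iff_exists_getVert] at hv
  obtain ⟨n, hn, hle⟩ := hv
  rcases lt_or_eq_of_le hle with h | h
  · exact ⟨n, h, hn⟩
  · refine ⟨0, by have := hc.three_le_length; omega, ?_⟩
    rw [Walk.getVert_zero, ← hn, h, Walk.getVert_length]

def dSet (c : M.Walk x x) (v : V) : Set ℕ :=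
  {n | ∃ y ∈ c.support, ∃ p : M.Walk v y, p.length = n}

noncomputable def dS (c : M.Walk x x) (v : V) : ℕ := sInf (dSet c v)

def Rch (c : M.Walk x x) (v : V) : Prop := (dSet c v).Nonempty

lemma rch_of_mem_support {c : M.Walk x x} {v : V} (h : v ∈ c.support) : Rch c v :=
  ⟨0, v, h, Walk.nil, rfl⟩

lemma dS_zero_of_mem_support {c : M.Walk x x} {v : V} (h : v ∈ c.support) : dS c v = 0 :=
  Nat.le_zero.mp (Nat.sInf_le ⟨v, h, Walk.nil, rfl⟩)

lemma mem_support_of_dS_zero {c : M.Walk x x} {v : V} (hr : Rch c v) (h : dS c v = 0) :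
    v ∈ c.support := by
  have hm := Nat.sInf_mem hr
  rw [show sInf (dSet c v) = dS c v from rfl, h] at hm
  obtain ⟨y, hy, p, hp⟩ := hm
  rwa [Walk.eq_of_length_eq_zero hp]

lemma rch_adj {c : M.Walk x x} {v w : V} (h : M.Adj v w) (hw : Rch c w) : Rch c v := by
  obtain ⟨n, y, hy, p, hp⟩ := hw
  exact ⟨n + 1, y, hy, Walk.cons h p, by simp [hp]⟩

lemma dS_le_adj {c : M.Walk x x} {v w : V} (h : M.Adj v w) (hw : Rch c w) :
    dS c v ≤ dS c w + 1 := by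
  obtain ⟨y, hy, p, hp⟩ := Nat.sInf_mem hw
  exact Nat.sInf_le ⟨y, hy, Walk.cons h p, by rw [Walk.length_cons, hp]; rfl⟩

lemma dS_lt_of_mem_support {c : M.Walk x x} {v y z : V} (hy : y ∈ c.support)
    (p : M.Walk v y) (hp : p.length = dS c v) (hz : z ∈ p.support) (hzv : z ≠ v) :
    dS c z < dS c v := by
  have h1 : (p.takeUntil z hz).length + (p.dropUntil z hz).length = p.length := by
    rw [← Walk.length_append, Walk.take_spec]
  have h2 : (p.takeUntil z hz).length ≠ 0 := fun h0 =>
    hzv (Walk.eq_of_length_eq_zero h0).symm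
  have h3 : dS c z ≤ (p.dropUntil z hz).length := Nat.sInf_le ⟨y, hy, _, rfl⟩
  omega

lemma bridge {c : M.Walk x x} (hc : c.IsCycle) (hu : GraphUnicyclic M) {v w : V}
    (hvw : M.Adj v w) (he : s(v, w) ∉ c.edges)
    (hreach : (M.deleteEdges {s(v, w)}).Reachable v w) : False := by
  have hx : ∃ (z : V) (p : M.Walk z z), p.IsCycle ∧ s(v, w) ∈ p.edges :=
    (SimpleGraph.adj_and_reachable_delete_edges_iff_exists_cycle).mp ⟨hvw, hreach⟩
  obtain ⟨z, p, hp, hep⟩ := hx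
  exact he ((hu.2 z x p c hp hc _).mp hep)

lemma cycle_reach {c : M.Walk x x} {e : Sym2 V} (he : e ∉ c.edges) {y1 y2 : V}
    (h1 : y1 ∈ c.support) (h2 : y2 ∈ c.support) :
    (M.deleteEdges {e}).Reachable y1 y2 := by
  have hq : ∀ e' ∈ ((c.dropUntil y1 h1).append (c.takeUntil y2 h2)).edges,
      e' ∉ ({e} : Set (Sym2 V)) := by
    intro e' he'
    rw [Walk.edges_append, List.mem_append] at he'
    have hce : e' ∈ c.edges :=
      he'.elim (fun h => Walk.edges_dropUntil_subset _ _ h)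
        (fun h => Walk.edges_takeUntil_subset _ _ h)
    simp only [Set.mem_singleton_iff]
    rintro rfl
    exact he hce
  exact ⟨((c.dropUntil y1 h1).append (c.takeUntil y2 h2)).toDeleteEdges {e} hq⟩

lemma exists_att {c : M.Walk x x} {v : V} (h : Rch c v) :
    ∃ y, y ∈ c.support ∧ ∃ p : M.Walk v y, p.length = dS c v := by
  obtain ⟨y, hy, p, hp⟩ := Nat.sInf_mem h
  exact ⟨y, hy, p, hp⟩

lemma no_same_level {c : M.Walk x x} (hc : c.IsCycle) (hu : GraphUnicyclic M) {v w : V}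
    (hvw : M.Adj v w) (hv : v ∉ c.support) (hw : w ∉ c.support)
    (hrv : Rch c v) (hrw : Rch c w) (heq : dS c v = dS c w) : False := by
  obtain ⟨y1, hy1, p1, hp1⟩ := exists_att hrv
  obtain ⟨y2, hy2, p2, hp2⟩ := exists_att hrw
  have he : s(v, w) ∉ c.edges := fun h => hv (Walk.fst_mem_support_of_mem_edges c h)
  have hwp1 : w ∉ p1.support := fun hmem => by
    have := dS_lt_of_mem_support hy1 p1 hp1 hmem hvw.ne'
    omega
  have hvp2 : v ∉ p2.support := fun hmem => by
    have := dS_lt_of_mem_support hy2 p2 hp2 hmem hvw.ne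
    omega
  have he1 : ∀ e' ∈ p1.edges, e' ∉ ({s(v, w)} : Set (Sym2 V)) := by
    intro e' he'
    simp only [Set.mem_singleton_iff]
    rintro rfl
    exact hwp1 (Walk.snd_mem_support_of_mem_edges p1 he')
  have he2 : ∀ e' ∈ p2.edges, e' ∉ ({s(v, w)} : Set (Sym2 V)) := by
    intro e' he'
    simp only [Set.mem_singleton_iff]
    rintro rfl
    exact hvp2 (Walk.fst_mem_support_of_mem_edges p2 he')
  have r1 : (M.deleteEdges {s(v, w)}).Reachable v y1 := ⟨p1.toDeleteEdges {s(v, w)} he1⟩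
  have r2 : (M.deleteEdges {s(v, w)}).Reachable y2 w := ⟨(p2.toDeleteEdges {s(v, w)} he2).reverse⟩
  exact bridge hc hu hvw he (r1.trans ((cycle_reach he hy1 hy2).trans r2))

lemma uniq_parent {c : M.Walk x x} (hc : c.IsCycle) (hu : GraphUnicyclic M) {v w1 w2 : V}
    (h1 : M.Adj v w1) (h2 : M.Adj v w2) (hv : v ∉ c.support)
    (hrw1 : Rch c w1) (hrw2 : Rch c w2)
    (hd1 : dS c w1 + 1 = dS c v) (hd2 : dS c w2 + 1 = dS c v) (hne : w1 ≠ w2) : False := by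
  obtain ⟨y1, hy1, p1, hp1⟩ := exists_att hrw1
  obtain ⟨y2, hy2, p2, hp2⟩ := exists_att hrw2
  have he : s(v, w1) ∉ c.edges := fun h => hv (Walk.fst_mem_support_of_mem_edges c h)
  have hvp1 : v ∉ p1.support := fun hmem => by
    have := dS_lt_of_mem_support hy1 p1 hp1 hmem h1.ne
    omega
  have hvp2 : v ∉ p2.support := fun hmem => by
    have := dS_lt_of_mem_support hy2 p2 hp2 hmem h2.ne
    omega
  have he1 : ∀ e' ∈ p1.edges, e' ∉ ({s(v, w1)} : Set (Sym2 V)) := by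
    intro e' he'
    simp only [Set.mem_singleton_iff]
    rintro rfl
    exact hvp1 (Walk.fst_mem_support_of_mem_edges p1 he')
  have he2 : ∀ e' ∈ p2.edges, e' ∉ ({s(v, w1)} : Set (Sym2 V)) := by
    intro e' he'
    simp only [Set.mem_singleton_iff]
    rintro rfl
    exact hvp2 (Walk.fst_mem_support_of_mem_edges p2 he')
  have hstep : (M.deleteEdges {s(v, w1)}).Adj v w2 := by
    rw [SimpleGraph.deleteEdges_adj]
    refine ⟨h2, ?_⟩
    simp only [Set.mem_singleton_iff]
    intro heq
    rw [Sym2.eq_iff] at heq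
    rcases heq with ⟨_, h⟩ | ⟨h, _⟩
    · exact hne h.symm
    · exact h1.ne h
  have r2 : (M.deleteEdges {s(v, w1)}).Reachable w2 y2 := ⟨p2.toDeleteEdges {s(v, w1)} he2⟩
  have r1 : (M.deleteEdges {s(v, w1)}).Reachable y1 w1 :=
    ⟨(p1.toDeleteEdges {s(v, w1)} he1).reverse⟩
  exact bridge hc hu h1 he
    ((hstep.reachable).trans (r2.trans ((cycle_reach he hy2 hy1).trans r1)))

lemma chord {c : M.Walk x x} (hc : c.IsCycle) (hu : GraphUnicyclic M) {v w : V}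
    (hvw : M.Adj v w) (hv : v ∈ c.support) (hw : w ∈ c.support) : s(v, w) ∈ c.edges := by
  by_contra he
  exact bridge hc hu hvw he (cycle_reach he hv hw)

lemma same_end {c : M.Walk x x} (hc : c.IsCycle) (hu : GraphUnicyclic M) :
    ∀ (k : ℕ) (v : V), Rch c v → dS c v = k → ∀ (y1 y2 : V), y1 ∈ c.support → y2 ∈ c.support →
      ∀ (p1 : M.Walk v y1) (p2 : M.Walk v y2), p1.length = k → p2.length = k → y1 = y2 := by
  intro k
  induction k with
  | zero =>
    intro v _ _ y1 y2 _ _ p1 p2 l1 l2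
    rw [← Walk.eq_of_length_eq_zero l1, ← Walk.eq_of_length_eq_zero l2]
  | succ k ih =>
    intro v hrv hdv y1 y2 hy1 hy2 p1 p2 l1 l2
    cases p1 with
    | nil => simp at l1
    | @cons _ w1 _ h1 q1 =>
      cases p2 with
      | nil => simp at l2
      | @cons _ w2 _ h2 q2 =>
        rw [Walk.length_cons] at l1 l2
        have lq1 : q1.length = k := by omega
        have lq2 : q2.length = k := by omega
        have hrw1 : Rch c w1 := ⟨k, y1, hy1, q1, lq1⟩
        have hrw2 : Rch c w2 := ⟨k, y2, hy2, q2, lq2⟩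
        have hdw1 : dS c w1 = k := by
          have ha : dS c w1 ≤ k := Nat.sInf_le (⟨y1, hy1, q1, lq1⟩ : k ∈ dSet c w1)
          have hb := dS_le_adj h1 hrw1
          omega
        have hdw2 : dS c w2 = k := by
          have ha : dS c w2 ≤ k := Nat.sInf_le (⟨y2, hy2, q2, lq2⟩ : k ∈ dSet c w2)
          have hb := dS_le_adj h2 hrw2
          omega
        have hvns : v ∉ c.support := fun hvs => by
          have := dS_zero_of_mem_support (c := c) hvs
          omega
        have hw12 : w1 = w2 := by
          by_contra hne
          exact uniq_parent hc hu h1 h2 hvns hrw1 hrw2 (by omega) (by omega) hne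
        subst hw12
        exact ih w1 hrw1 hdw1 y1 y2 hy1 hy2 q1 q2 lq1 lq2

noncomputable def att (c : M.Walk x x) (v : V) : V :=
  if h : Rch c v then (exists_att h).choose else v

lemma att_spec {c : M.Walk x x} {v : V} (h : Rch c v) :
    att c v ∈ c.support ∧ ∃ p : M.Walk v (att c v), p.length = dS c v := by
  rw [att, dif_pos h]
  exact ⟨(exists_att h).choose_spec.1, (exists_att h).choose_spec.2⟩

lemma att_unique {c : M.Walk x x} (hc : c.IsCycle) (hu : GraphUnicyclic M) {v : V}
    (h : Rch c v) {y : V} (hy : y ∈ c.support) (p : M.Walk v y) (hp : p.length = dS c v) :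
    att c v = y := by
  obtain ⟨q, hq⟩ := (att_spec h).2
  exact same_end hc hu (dS c v) v h rfl _ y (att_spec h).1 hy q p hq hp

lemma dist_lt_of_mem_support' {ρ v z : V} (p : M.Walk v ρ) (hp : p.length = M.dist v ρ)
    (hz : z ∈ p.support) (hzv : z ≠ v) : M.dist z ρ < M.dist v ρ := by
  have h1 : (p.takeUntil z hz).length + (p.dropUntil z hz).length = p.length := by
    rw [← Walk.length_append, Walk.take_spec]
  have h2 : (p.takeUntil z hz).length ≠ 0 := fun h0 =>
    hzv (Walk.eq_of_length_eq_zero h0).symm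
  have h3 : M.dist z ρ ≤ (p.dropUntil z hz).length := SimpleGraph.dist_le _
  omega

lemma tree_same_level {c : M.Walk x x} (hc : c.IsCycle) (hu : GraphUnicyclic M) {v w ρ : V}
    (hvw : M.Adj v w) (hnrv : ¬ Rch c v)
    (hvρ : M.Reachable v ρ) (hwρ : M.Reachable w ρ)
    (heq : M.dist v ρ = M.dist w ρ) : False := by
  obtain ⟨p, hp⟩ := hvρ.exists_walk_length_eq_dist
  obtain ⟨q, hq⟩ := hwρ.exists_walk_length_eq_dist
  have he : s(v, w) ∉ c.edges := fun h =>
    hnrv (rch_of_mem_support (Walk.fst_mem_support_of_mem_edges c h))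
  have hwp : w ∉ p.support := fun hmem => by
    have := dist_lt_of_mem_support' p hp hmem hvw.ne'
    omega
  have hvq : v ∉ q.support := fun hmem => by
    have := dist_lt_of_mem_support' q hq hmem hvw.ne
    omega
  have he1 : ∀ e' ∈ p.edges, e' ∉ ({s(v, w)} : Set (Sym2 V)) := by
    intro e' he'
    simp only [Set.mem_singleton_iff]
    rintro rfl
    exact hwp (Walk.snd_mem_support_of_mem_edges p he')
  have he2 : ∀ e' ∈ q.edges, e' ∉ ({s(v, w)} : Set (Sym2 V)) := by
    intro e' he'
    simp only [Set.mem_singleton_iff]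
    rintro rfl
    exact hvq (Walk.fst_mem_support_of_mem_edges q he')
  have r1 : (M.deleteEdges {s(v, w)}).Reachable v ρ := ⟨p.toDeleteEdges {s(v, w)} he1⟩
  have r2 : (M.deleteEdges {s(v, w)}).Reachable ρ w := ⟨(q.toDeleteEdges {s(v, w)} he2).reverse⟩
  exact bridge hc hu hvw he (r1.trans r2)

lemma triangle_walks {W : Type} {H : SimpleGraph W} {z z1 z2 : W}
    (h1 : H.Adj z z1) (h2 : H.Adj z1 z2) (h3 : H.Adj z z2) :
    ∀ m, 2 ≤ m → ∃ p : H.Walk z z, p.length = m ∧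
      ∀ y ∈ p.support, y = z ∨ y = z1 ∨ y = z2 := by
  intro m
  induction m using Nat.strong_induction_on with
  | _ m ih =>
    intro hm
    match m, hm with
    | 2, _ =>
      refine ⟨.cons h1 (.cons h1.symm .nil), by simp, ?_⟩
      intro y hy
      simp only [Walk.support_cons, Walk.support_nil, List.mem_cons,
        List.mem_singleton] at hy
      tauto
    | 3, _ =>
      refine ⟨.cons h1 (.cons h2 (.cons h3.symm .nil)), by simp, ?_⟩
      intro y hy
      simp only [Walk.support_cons, Walk.support_nil, List.mem_cons,
        List.mem_singleton] at hy
      tauto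
    | (m+4), _ =>
      obtain ⟨p, hl, hs⟩ := ih (m+2) (by omega) (by omega)
      refine ⟨.cons h1 (.cons h1.symm p), by simp [hl], ?_⟩
      intro y hy
      simp only [Walk.support_cons, List.mem_cons] at hy
      rcases hy with rfl | rfl | hy
      · tauto
      · tauto
      · exact hs y hy

end Stmt6Aux

open Stmt6Aux

/-- Let `H` be a finite connected simple graph containing a triangle, `u` a
vertex of `H`, and `M` a finite unicyclic simple graph with unique cycle `c`.
If `r ≥ |V(H)| + 3`, then there is a homomorphism `h : M → H` mapping every
vertex at distance exactly `r` from the cycle `c` to `u`. -/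
theorem stmt6 {V W : Type} [Fintype V] [Fintype W]
    (H : SimpleGraph W) (hconn : H.Connected) (htri : HasTriangle H) (u : W)
    (M : SimpleGraph V) (x : V) (c : M.Walk x x) (hc : c.IsCycle)
    (huniq : GraphUnicyclic M)
    (r : ℕ) (hr : Fintype.card W + 3 ≤ r) :
    ∃ h : M →g H, ∀ w : V, DistToCycleEq c w r → h w = u := by
  classical
  obtain ⟨a, b, t, hab, hbt, hat⟩ := htri
  have hcardW : 0 < Fintype.card W := Fintype.card_pos_iff.mpr ⟨u⟩
  have hr4 : 4 ≤ r := by omega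
  have hL3 : 3 ≤ c.length := hc.three_le_length
  obtain ⟨cw, hcwlen, hcwsup⟩ := triangle_walks hab hbt hat c.length (by omega)
  obtain ⟨u', huu'⟩ : ∃ u', H.Adj u u' := by
    by_cases h : u = a
    · exact ⟨b, h ▸ hab⟩
    · obtain ⟨p⟩ := hconn u a
      exact ⟨p.getVert 1, Walk.adj_snd (Walk.not_nil_of_ne h)⟩
  have tri_at : ∀ z : W, (z = a ∨ z = b ∨ z = t) → ∃ p : H.Walk z u, p.length = r := by
    intro z hz
    obtain ⟨p0⟩ := hconn z u
    have hpb : p0.bypass.IsPath := Walk.bypass_isPath p0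
    have hlt : p0.bypass.length < Fintype.card W := hpb.length_lt
    have hloopEx : ∃ q : H.Walk z z, q.length = r - p0.bypass.length ∧
        ∀ y ∈ q.support, y = z ∨ True := by
      rcases hz with rfl | rfl | rfl
      · obtain ⟨q, hq, _⟩ := triangle_walks hab hbt hat (r - p0.bypass.length) (by omega)
        exact ⟨q, hq, fun y _ => Or.inr trivial⟩
      · obtain ⟨q, hq, _⟩ := triangle_walks hab.symm hat hbt (r - p0.bypass.length) (by omega)
        exact ⟨q, hq, fun y _ => Or.inr trivial⟩
      · obtain ⟨q, hq, _⟩ := triangle_walks hat.symm hab hbt.symm (r - p0.bypass.length)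
          (by omega)
        exact ⟨q, hq, fun y _ => Or.inr trivial⟩
    obtain ⟨q, hq, -⟩ := hloopEx
    refine ⟨q.append p0.bypass, ?_⟩
    rw [Walk.length_append, hq]
    omega
  have hwalks : ∀ i : ℕ, ∃ p : H.Walk (cw.getVert i) u, p.length = r := fun i =>
    tri_at _ (hcwsup _ (getVert_mem_support cw i))
  choose wq hwq using hwalks
  -- index of a vertex on the cycle
  set idx : V → ℕ := fun v =>
    if h : ∃ i, i < c.length ∧ c.getVert i = v then h.choose else 0 with hidxdef
  have idx_spec : ∀ v, v ∈ c.support → idx v < c.length ∧ c.getVert (idx v) = v := by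
    intro v hv
    have hex := cycle_exists_idx hc hv
    simp only [hidxdef, dif_pos hex]
    exact hex.choose_spec
  have idx_getVert : ∀ {i : ℕ}, i < c.length → idx (c.getVert i) = i := by
    intro i hi
    have hs := idx_spec (c.getVert i) (getVert_mem_support c i)
    exact cycle_getVert_inj hc hs.1 hi hs.2
  -- the target sequences
  set Q : ℕ → ℕ → W := fun i k =>
    if k ≤ r then (wq i).getVert k else if Even (k - r) then u else u' with hQdef
  have hQ0 : ∀ i, Q i 0 = cw.getVert i := by
    intro i
    simp only [hQdef]
    rw [if_pos (by omega : (0:ℕ) ≤ r), Walk.getVert_zero]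
  have hQr : ∀ i, Q i r = u := by
    intro i
    simp only [hQdef]
    rw [if_pos le_rfl, ← hwq i, Walk.getVert_length]
  have hQadj : ∀ i k, H.Adj (Q i k) (Q i (k+1)) := by
    intro i k
    rcases le_or_gt (k+1) r with h | h
    · have e1 : Q i k = (wq i).getVert k := by
        simp only [hQdef]
        rw [if_pos (by omega : k ≤ r)]
      have e2 : Q i (k+1) = (wq i).getVert (k+1) := by
        simp only [hQdef]
        rw [if_pos h]
      rw [e1, e2]
      exact Walk.adj_getVert_succ _ (by rw [hwq i]; omega)
    · rcases le_or_gt k r with h2 | h2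
      · have hkr : k = r := by omega
        have e1 : Q i k = u := by rw [hkr]; exact hQr i
        have e2 : Q i (k+1) = u' := by
          simp only [hQdef]
          rw [if_neg (by omega : ¬ k + 1 ≤ r)]
          have hsub : k + 1 - r = 1 := by omega
          rw [hsub, if_neg (by simp)]
        rw [e1, e2]
        exact huu'
      · have hsub : k + 1 - r = (k - r) + 1 := by omega
        by_cases hev : Even (k - r)
        · have e1 : Q i k = u := by
            simp only [hQdef]
            rw [if_neg (by omega : ¬ k ≤ r), if_pos hev]
          have e2 : Q i (k+1) = u' := by
            simp only [hQdef]
            rw [if_neg (by omega : ¬ k + 1 ≤ r), hsub,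
              if_neg (by simp [Nat.even_add_one, hev])]
          rw [e1, e2]
          exact huu'
        · have e1 : Q i k = u' := by
            simp only [hQdef]
            rw [if_neg (by omega : ¬ k ≤ r), if_neg hev]
          have e2 : Q i (k+1) = u := by
            simp only [hQdef]
            rw [if_neg (by omega : ¬ k + 1 ≤ r), hsub,
              if_pos (by simp [Nat.even_add_one, hev])]
          rw [e1, e2]
          exact huu'.symm
  -- roots for the acyclic components
  set root : V → V := fun v => Quot.out (M.connectedComponentMk v) with hrootdef
  have reach_root : ∀ v, M.Reachable v (root v) := by
    intro v
    have h : M.connectedComponentMk (root v) = M.connectedComponentMk v := by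
      simp only [hrootdef]
      exact Quot.out_eq _
    exact (ConnectedComponent.exact h).symm
  have root_adj : ∀ v w, M.Adj v w → root v = root w := by
    intro v w hvw
    simp only [hrootdef]
    exact congrArg Quot.out (ConnectedComponent.sound hvw.reachable)
  -- the homomorphism
  set f : V → W := fun v =>
    if _hrv : Rch c v then
      (if dS c v = 0 then cw.getVert (idx v)
       else Q (idx (att c v)) (dS c v))
    else (if Even (M.dist v (root v)) then a else b) with hfdef
  have hfS : ∀ v (h : Rch c v), dS c v = 0 → f v = cw.getVert (idx v) := by
    intro v h h0
    simp only [hfdef]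
    rw [dif_pos h, if_pos h0]
  have hfQ : ∀ v (h : Rch c v), dS c v ≠ 0 → f v = Q (idx (att c v)) (dS c v) := by
    intro v h h0
    simp only [hfdef]
    rw [dif_pos h, if_neg h0]
  have hfT : ∀ v, ¬ Rch c v → f v = (if Even (M.dist v (root v)) then a else b) := by
    intro v h
    simp only [hfdef]
    rw [dif_neg h]
  -- adjacency of consecutive cycle vertices
  have pair : ∀ i : ℕ, i < c.length → H.Adj (f (c.getVert i)) (f (c.getVert (i+1))) := by
    intro i hi
    have hvs : c.getVert i ∈ c.support := getVert_mem_support c i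
    have hws : c.getVert (i+1) ∈ c.support := getVert_mem_support c (i+1)
    rw [hfS _ (rch_of_mem_support hvs) (dS_zero_of_mem_support hvs),
        hfS _ (rch_of_mem_support hws) (dS_zero_of_mem_support hws)]
    rw [idx_getVert hi]
    rcases lt_or_eq_of_le (by omega : i + 1 ≤ c.length) with h | h
    · rw [idx_getVert h]
      exact Walk.adj_getVert_succ cw (by rw [hcwlen]; omega)
    · have hx1 : c.getVert (i+1) = x := by rw [h, Walk.getVert_length]
      have hidx0 : idx x = 0 := by
        rw [← Walk.getVert_zero c]
        exact idx_getVert (by omega)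
      rw [hx1, hidx0]
      have hcw0 : cw.getVert 0 = cw.getVert cw.length := by
        rw [Walk.getVert_zero, Walk.getVert_length]
      rw [hcw0]
      have hicw : i + 1 = cw.length := by omega
      rw [← hicw]
      exact Walk.adj_getVert_succ cw (by omega)
  -- the step lemma
  have step : ∀ v w, M.Adj v w → Rch c v → Rch c w → dS c w = dS c v + 1 →
      H.Adj (f v) (f w) := by
    intro v w hvw hrv hrw hd
    have hw0 : dS c w ≠ 0 := by omega
    rw [hfQ w hrw hw0]
    by_cases h0 : dS c v = 0
    · have hvs : v ∈ c.support := mem_support_of_dS_zero hrv h0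
      have hattw : att c w = v := by
        apply att_unique hc huniq hrw hvs (Walk.cons hvw.symm Walk.nil)
        rw [Walk.length_cons, Walk.length_nil]
        omega
      rw [hfS v hrv h0, hattw, hd, h0]
      rw [← hQ0 (idx v)]
      exact hQadj (idx v) 0
    · rw [hfQ v hrv h0]
      have hex : ∃ yw, yw ∈ c.support ∧ yw = att c w ∧
          ∃ pw : M.Walk w yw, pw.length = dS c w :=
        ⟨att c w, (att_spec hrw).1, rfl, (att_spec hrw).2⟩
      obtain ⟨yw, hyws, hywatt, pw, hpw⟩ := hex
      cases pw with
      | nil =>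
        rw [Walk.length_nil] at hpw
        omega
      | @cons _ w' _ h1 q1 =>
        rw [Walk.length_cons] at hpw
        have lq1 : q1.length = dS c v := by omega
        have hrw' : Rch c w' := ⟨dS c v, yw, hyws, q1, lq1⟩
        have hdw' : dS c w' = dS c v := by
          have ha : dS c w' ≤ dS c v := Nat.sInf_le ⟨yw, hyws, q1, lq1⟩
          have hb := dS_le_adj h1 hrw'
          omega
        have hwns : w ∉ c.support := fun hs => hw0 (dS_zero_of_mem_support hs)
        have hw'v : w' = v := by
          by_contra hne
          exact uniq_parent hc huniq h1 hvw.symm hwns hrw' hrv (by omega) (by omega) hne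
        have hatteq : att c v = att c w :=
          (att_unique hc huniq hrv hyws (q1.copy hw'v rfl)
            (by rw [Walk.length_copy]; exact lq1)).trans hywatt
        rw [hatteq, hd]
        exact hQadj _ _
  have key : ∀ v w, M.Adj v w → H.Adj (f v) (f w) := by
    intro v w hvw
    by_cases hrv : Rch c v
    · have hrw : Rch c w := rch_adj hvw.symm hrv
      by_cases h0v : dS c v = 0 <;> by_cases h0w : dS c w = 0
      · have hvs := mem_support_of_dS_zero hrv h0v
        have hws := mem_support_of_dS_zero hrw h0w
        have hedge := chord hc huniq hvw hvs hws
        obtain ⟨i, hi, hcase⟩ := mem_edges_getVert hedge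
        rcases hcase with ⟨hv1, hv2⟩ | ⟨hv1, hv2⟩
        · rw [← hv1, ← hv2]; exact pair i hi
        · rw [← hv1, ← hv2]; exact (pair i hi).symm
      · have h1 : dS c w = dS c v + 1 := by
          have := dS_le_adj hvw.symm hrv
          omega
        exact step v w hvw hrv hrw h1
      · have h1 : dS c v = dS c w + 1 := by
          have := dS_le_adj hvw hrw
          omega
        exact (step w v hvw.symm hrw hrv h1).symm
      · have hvs : v ∉ c.support := fun h => h0v (dS_zero_of_mem_support h)
        have hws : w ∉ c.support := fun h => h0w (dS_zero_of_mem_support h)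
        have hne : dS c v ≠ dS c w := fun h =>
          no_same_level hc huniq hvw hvs hws hrv hrw h
        have ha := dS_le_adj hvw hrw
        have hb := dS_le_adj hvw.symm hrv
        rcases (by omega : dS c w = dS c v + 1 ∨ dS c v = dS c w + 1) with h | h
        · exact step v w hvw hrv hrw h
        · exact (step w v hvw.symm hrw hrv h).symm
    · have hrw : ¬ Rch c w := fun h => hrv (rch_adj hvw h)
      rw [hfT v hrv, hfT w hrw]
      have hroot := root_adj v w hvw
      have hrvρ := reach_root v
      have hwρ : M.Reachable w (root v) := hroot ▸ reach_root w
      have hne : M.dist v (root v) ≠ M.dist w (root v) := fun h =>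
        tree_same_level hc huniq hvw hrv hrvρ hwρ h
      obtain ⟨p, hp⟩ := hrvρ.exists_walk_length_eq_dist
      obtain ⟨q, hq⟩ := hwρ.exists_walk_length_eq_dist
      have ha : M.dist v (root v) ≤ M.dist w (root v) + 1 := by
        have h := SimpleGraph.dist_le (Walk.cons hvw q)
        rw [Walk.length_cons, hq] at h
        exact h
      have hb : M.dist w (root v) ≤ M.dist v (root v) + 1 := by
        have h := SimpleGraph.dist_le (Walk.cons hvw.symm p)
        rw [Walk.length_cons, hp] at h
        exact h
      rw [← hroot]
      rcases (by omega : M.dist w (root v) = M.dist v (root v) + 1 ∨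
          M.dist v (root v) = M.dist w (root v) + 1) with h | h
      · rw [h]
        by_cases hev : Even (M.dist v (root v))
        · rw [if_pos hev, if_neg (by simp [Nat.even_add_one, hev])]
          exact hab
        · rw [if_neg hev, if_pos (by simp [Nat.even_add_one, hev])]
          exact hab.symm
      · rw [h]
        by_cases hev : Even (M.dist w (root v))
        · rw [if_neg (by simp [Nat.even_add_one, hev]), if_pos hev]
          exact hab.symm
        · rw [if_pos (by simp [Nat.even_add_one, hev]), if_neg hev]
          exact hab
  refine ⟨⟨f, fun {p q} hpq => key p q hpq⟩, ?_⟩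
  intro z hz
  obtain ⟨⟨y, hy, p, hp⟩, hmin⟩ := hz
  have hrz : Rch c z := ⟨r, y, hy, p, hp⟩
  have hdz : dS c z = r := by
    have h1 : dS c z ≤ r := Nat.sInf_le ⟨y, hy, p, hp⟩
    obtain ⟨y', hy', p', hp'⟩ := exists_att hrz
    have h2 := hmin y' hy' p'
    omega
  have hz0 : dS c z ≠ 0 := by omega
  show f z = u
  rw [hfQ z hrz hz0, hdz]
  exact hQr _
end

section
/- Fix integers k ≥ 2, t ≥ 1, a constant c > 0, and ε > 0, and let p = p(n) ≤ c·n^{1−k}. Let G be the binomial random k-uniform hypergraph G^k(n,p) and let T be a uniformly random t-element subset of the vertices, chosen independently of G. Then for every integer r > 0 there exists an integer L = L(c,t,r,ε) such that, for all sufficiently large n, with probability at least 1 − ε all of the following hold: (i) no hyperedge of G contains more than one vertex of T; (ii) the sub-hypergraph of G induced on the set of vertices at distance at most r from T contains no cycle; (iii) at most L vertices are at distance at most r from T. -/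
open Filter
open scoped Classical

noncomputable section

/-- A `k`-uniform hypergraph on vertex type `V`: a finite set of hyperedges,
each a multiset of `k` vertices (repeated vertices allowed). -/
structure UniformHypergraph (k : ℕ) (V : Type) where
  edges : Finset (Multiset V)
  card_eq : ∀ e ∈ edges, Multiset.card e = k

/-- A cycle of size `r` in a hypergraph: pairwise distinct hyperedges
`e 0, …, e (r-1)`, pairwise distinct vertices `v 0, …, v (r-1)` with
`v r = v 0`, each `e i` containing both `v i` and `v (i+1)`. -/
def UniformHypergraph.IsCycle {k : ℕ} {V : Type} (G : UniformHypergraph k V)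
    (r : ℕ) (v : Fin (r + 1) → V) (e : Fin r → Multiset V) : Prop :=
  2 ≤ r ∧ (∀ i, e i ∈ G.edges) ∧ Function.Injective e ∧
  (∀ i j : Fin r, v i.castSucc = v j.castSucc → i = j) ∧
  v (Fin.last r) = v 0 ∧
  ∀ i : Fin r, v i.castSucc ∈ e i ∧ v i.succ ∈ e i

/-- Truncation of a real number to `[0,1]`, so that it is a probability. -/
def clamp01 (p : ℝ) : ℝ := max 0 (min 1 p)

/-- The potential hyperedges of `G^k(n,p)`: `k`-element subsets of `Fin n`. -/
abbrev HyperSlot (n k : ℕ) := {s : Finset (Fin n) // s.card = k}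

/-- The `k`-uniform hypergraph on `Fin n` determined by an indicator function
on the potential hyperedges. -/
def hyperOf (n k : ℕ) (f : HyperSlot n k → Bool) : UniformHypergraph k (Fin n) where
  edges := (Finset.univ.filter fun s : HyperSlot n k => f s = true).image
      fun s : HyperSlot n k => (s.val.val : Multiset (Fin n))
  card_eq := by
    intro e he
    simp only [Finset.mem_image, Finset.mem_filter] at he
    obtain ⟨s, -, rfl⟩ := he
    exact s.2

/-- `distLE E A m v` holds iff in the hypergraph with hyperedge set `E` the
vertex `v` is at distance at most `m` (in the walk metric) from the vertex
set `A`. -/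
def distLE {n : ℕ} (E : Finset (Multiset (Fin n))) (A : Finset (Fin n)) :
    ℕ → Fin n → Prop
  | 0, v => v ∈ A
  | m + 1, v => distLE E A m v ∨ ∃ e ∈ E, v ∈ e ∧ ∃ u ∈ e, distLE E A m u

/-- The event of the local structure lemma, for the random hypergraph given
by the edge indicator `f` and the random `t`-set `T`:
(i) no hyperedge contains more than one vertex of `T`;
(ii) the sub-hypergraph induced on the vertices at distance at most `r` from
`T` contains no cycle;
(iii) at most `L` vertices are at distance at most `r` from `T`. -/
def LocalGood (k t n r L : ℕ) (f : HyperSlot n k → Bool)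
    (T : {T : Finset (Fin n) // T.card = t}) : Prop :=
  (∀ s : HyperSlot n k, f s = true → (s.val ∩ T.val).card ≤ 1) ∧
  (¬ ∃ (m : ℕ) (v : Fin (m + 1) → Fin n) (e : Fin m → Multiset (Fin n)),
      (hyperOf n k f).IsCycle m v e ∧
      ∀ (i : Fin m), ∀ u ∈ e i, distLE (hyperOf n k f).edges T.val r u) ∧
  ((Finset.univ.filter fun v : Fin n =>
      distLE (hyperOf n k f).edges T.val r v).card ≤ L)

/-- The probability that the event of the local structure lemma holds, where
the hypergraph is `G^k(n,p)` and `T` is a uniformly random `t`-element vertex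
subset chosen independently of it. -/
def localProb (k t n : ℕ) (p : ℝ) (r L : ℕ) : ℝ :=
  ∑ f : HyperSlot n k → Bool, ∑ T : {T : Finset (Fin n) // T.card = t},
    (∏ s : HyperSlot n k, if f s then clamp01 p else 1 - clamp01 p) *
      ((n.choose t : ℝ))⁻¹ * (if LocalGood k t n r L f T then 1 else 0)

namespace Stmt9

def ind (P : Prop) : ℝ := if P then 1 else 0

lemma ind_nonneg (P : Prop) : 0 ≤ ind P := by unfold ind; split <;> norm_num

lemma ind_le_one (P : Prop) : ind P ≤ 1 := by unfold ind; split <;> norm_num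

lemma ind_of {P : Prop} (h : P) : ind P = 1 := if_pos h

lemma ind_of_not {P : Prop} (h : ¬ P) : ind P = 0 := if_neg h

lemma ind_mono {P Q : Prop} (h : P → Q) : ind P ≤ ind Q := by
  unfold ind; split
  · rename_i hp; rw [if_pos (h hp)]
  · exact ind_nonneg Q

lemma ind_le_mul {P Q R : Prop} (h : P → Q ∧ R) : ind P ≤ ind Q * ind R := by
  unfold ind; split
  · rename_i hp; rw [if_pos (h hp).1, if_pos (h hp).2]; norm_num
  · positivity

lemma ind_and (P Q : Prop) : ind (P ∧ Q) = ind P * ind Q := by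
  unfold ind
  by_cases hp : P <;> by_cases hq : Q <;> simp [hp, hq]

lemma ind_exists_le {α : Type*} [Fintype α] (P : α → Prop) :
    ind (∃ a, P a) ≤ ∑ a, ind (P a) := by
  by_cases h : ∃ a, P a
  · obtain ⟨a, ha⟩ := h
    rw [ind_of ⟨a, ha⟩]
    calc (1:ℝ) = ind (P a) := (ind_of ha).symm
    _ ≤ ∑ a, ind (P a) :=
      Finset.single_le_sum (fun a _ => ind_nonneg (P a)) (Finset.mem_univ a)
  · rw [ind_of_not h]
    exact Finset.sum_nonneg fun a _ => ind_nonneg (P a)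

lemma sum_ind_card {α : Type*} [Fintype α] (P : α → Prop) :
    ∑ a, ind (P a) = ((Finset.univ.filter P).card : ℝ) := by
  unfold ind
  rw [Finset.sum_boole]

variable {n k : ℕ}

def mu (q : ℝ) (f : HyperSlot n k → Bool) : ℝ :=
  ∏ s, if f s then q else 1 - q

lemma mu_nonneg {q : ℝ} (hq0 : 0 ≤ q) (hq1 : q ≤ 1) (f : HyperSlot n k → Bool) :
    0 ≤ mu q f := by
  apply Finset.prod_nonneg
  intro s _
  split <;> linarith

lemma sum_mu (q : ℝ) : ∑ f : HyperSlot n k → Bool, mu q f = 1 := by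
  unfold mu
  rw [← Fintype.prod_sum (fun (_ : HyperSlot n k) (b : Bool) => if b then q else 1 - q)]
  simp

lemma sum_mu_subset (q : ℝ) (E : Finset (HyperSlot n k)) :
    ∑ f : HyperSlot n k → Bool, mu q f * ind (∀ s ∈ E, f s = true) = q ^ E.card := by
  have key : ∀ f : HyperSlot n k → Bool,
      mu q f * ind (∀ s ∈ E, f s = true)
      = ∏ s : HyperSlot n k,
          ((if f s then q else 1 - q) * (if s ∈ E then (if f s then 1 else 0) else 1)) := by
    intro f
    by_cases h : ∀ s ∈ E, f s = true
    · rw [ind_of h, mul_one]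
      unfold mu
      apply Finset.prod_congr rfl
      intro s _
      by_cases hs : s ∈ E
      · simp [hs, h s hs]
      · simp [hs]
    · rw [ind_of_not h, mul_zero]
      push_neg at h
      obtain ⟨s₀, hs₀, hfs₀⟩ := h
      rw [eq_comm]
      apply Finset.prod_eq_zero (Finset.mem_univ s₀)
      simp [hs₀, hfs₀]
  rw [Finset.sum_congr rfl fun f _ => key f]
  rw [← Fintype.prod_sum (fun (s : HyperSlot n k) (b : Bool) =>
    (if b then q else 1 - q) * (if s ∈ E then (if b then 1 else 0) else 1))]
  have : ∀ s : HyperSlot n k,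
      (∑ b : Bool, (if b then q else 1 - q) * (if s ∈ E then (if b then 1 else 0) else 1))
      = if s ∈ E then q else 1 := by
    intro s
    by_cases hs : s ∈ E <;> simp [hs]
  rw [Finset.prod_congr rfl fun s _ => this s]
  rw [Finset.prod_ite_mem]
  rw [Finset.univ_inter, Finset.prod_const]

/-! ### Expectation lemmas -/

lemma expect_count (q : ℝ) {ι : Type*} [Fintype ι] (St : ι → Prop)
    (Ed : ι → Finset (HyperSlot n k)) :
    ∑ f : HyperSlot n k → Bool,
      mu q f * (∑ i, ind (St i ∧ ∀ s ∈ Ed i, f s = true))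
    = ∑ i, ind (St i) * q ^ (Ed i).card := by
  have : ∀ f : HyperSlot n k → Bool,
      mu q f * (∑ i, ind (St i ∧ ∀ s ∈ Ed i, f s = true))
      = ∑ i, ind (St i) * (mu q f * ind (∀ s ∈ Ed i, f s = true)) := by
    intro f
    rw [Finset.mul_sum]
    apply Finset.sum_congr rfl
    intro i _
    rw [ind_and]; ring
  rw [Finset.sum_congr rfl fun f _ => this f, Finset.sum_comm]
  apply Finset.sum_congr rfl
  intro i _
  rw [← Finset.mul_sum, sum_mu_subset]

lemma expect_exists (q : ℝ) (hq0 : 0 ≤ q) (hq1 : q ≤ 1)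
    {ι : Type*} [Fintype ι] (St : ι → Prop) (Ed : ι → Finset (HyperSlot n k)) :
    ∑ f : HyperSlot n k → Bool,
      mu q f * ind (∃ i, St i ∧ ∀ s ∈ Ed i, f s = true)
    ≤ ∑ i, ind (St i) * q ^ (Ed i).card := by
  rw [← expect_count q St Ed]
  apply Finset.sum_le_sum
  intro f _
  exact mul_le_mul_of_nonneg_left (ind_exists_le _) (mu_nonneg hq0 hq1 f)

/-! ### Counting slots -/

lemma sum_ind_mem_card {α : Type*} [Fintype α] (B : Finset α) :
    ∑ a : α, ind (a ∈ B) = (B.card : ℝ) := by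
  rw [← Finset.sum_subset (Finset.subset_univ B) (fun x _ hx => ind_of_not hx)]
  rw [Finset.sum_congr rfl (fun x hx => ind_of hx), Finset.sum_const, nsmul_eq_mul, mul_one]

lemma sum_ind_le_card {α : Type*} [Fintype α] (P : α → Prop) (B : Finset α)
    (h : ∀ a, P a → a ∈ B) : ∑ a, ind (P a) ≤ (B.card : ℝ) := by
  rw [← sum_ind_mem_card B]
  exact Finset.sum_le_sum fun a _ => ind_mono (h a)

lemma card_slot_supset (P : Finset (Fin n)) :
    ((Finset.univ.filter fun s : HyperSlot n k => P ⊆ s.val).card : ℕ)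
      ≤ n ^ (k - P.card) := by
  calc (Finset.univ.filter fun s : HyperSlot n k => P ⊆ s.val).card
      ≤ (Finset.univ.powersetCard (k - P.card) : Finset (Finset (Fin n))).card := by
        apply Finset.card_le_card_of_injOn (fun s => s.val \ P)
        · intro s hs
          simp only [Finset.mem_coe, Finset.mem_filter] at hs
          rw [Finset.mem_coe, Finset.mem_powersetCard]
          refine ⟨Finset.subset_univ _, ?_⟩
          rw [Finset.card_sdiff_of_subset hs.2, s.2]
        · intro s hs s' hs' hss
          simp only [Finset.mem_coe, Finset.mem_filter] at hs hs'
          simp only at hss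
          apply Subtype.ext
          have h1 := congrArg (fun X => X ∪ P) hss
          rwa [Finset.sdiff_union_of_subset hs.2, Finset.sdiff_union_of_subset hs'.2] at h1
    _ ≤ n ^ (k - P.card) := by
        rw [Finset.card_powersetCard, Finset.card_univ, Fintype.card_fin]
        exact Nat.choose_le_pow n (k - P.card)

lemma sum_slot_supset_pair {x y : Fin n} (hxy : x ≠ y) :
    ∑ s : HyperSlot n k, ind (x ∈ s.val ∧ y ∈ s.val) ≤ (n : ℝ) ^ (k - 2) := by
  calc ∑ s : HyperSlot n k, ind (x ∈ s.val ∧ y ∈ s.val)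
      ≤ ((Finset.univ.filter fun s : HyperSlot n k => ({x, y} : Finset (Fin n)) ⊆ s.val).card : ℝ) := by
        apply sum_ind_le_card
        intro s hs
        simp only [Finset.mem_filter, Finset.mem_univ, true_and]
        intro z hz
        rcases Finset.mem_insert.1 hz with h | h
        · rw [h]; exact hs.1
        · rw [Finset.mem_singleton] at h; rw [h]; exact hs.2
    _ ≤ (n : ℝ) ^ (k - 2) := by
        have h2 : ({x, y} : Finset (Fin n)).card = 2 := Finset.card_pair hxy
        have := card_slot_supset (n := n) (k := k) {x, y}
        rw [h2] at this
        exact_mod_cast this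

lemma sum_slot_mem (x : Fin n) :
    ∑ s : HyperSlot n k, ind (x ∈ s.val) ≤ (n : ℝ) ^ (k - 1) := by
  calc ∑ s : HyperSlot n k, ind (x ∈ s.val)
      ≤ ((Finset.univ.filter fun s : HyperSlot n k => ({x} : Finset (Fin n)) ⊆ s.val).card : ℝ) := by
        apply sum_ind_le_card
        intro s hs
        simp only [Finset.mem_filter, Finset.mem_univ, true_and, Finset.singleton_subset_iff]
        exact hs
    _ ≤ (n : ℝ) ^ (k - 1) := by
        have := card_slot_supset (n := n) (k := k) {x}
        rw [Finset.card_singleton] at this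
        exact_mod_cast this

lemma sum_slot_meet (A : Finset (Fin n)) :
    ∑ s : HyperSlot n k, ind ((s.val ∩ A).Nonempty)
      ≤ (A.card : ℝ) * (n : ℝ) ^ (k - 1) := by
  have key : ∀ s : HyperSlot n k,
      ind ((s.val ∩ A).Nonempty) ≤ ∑ x ∈ A, ind (x ∈ s.val) := by
    intro s
    by_cases h : (s.val ∩ A).Nonempty
    · rw [ind_of h]
      obtain ⟨x, hx⟩ := h
      rw [Finset.mem_inter] at hx
      calc (1:ℝ) = ind (x ∈ s.val) := (ind_of hx.1).symm
        _ ≤ ∑ x ∈ A, ind (x ∈ s.val) :=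
          Finset.single_le_sum (fun x _ => ind_nonneg _) hx.2
    · rw [ind_of_not h]
      exact Finset.sum_nonneg fun x _ => ind_nonneg _
  calc ∑ s : HyperSlot n k, ind ((s.val ∩ A).Nonempty)
      ≤ ∑ s : HyperSlot n k, ∑ x ∈ A, ind (x ∈ s.val) :=
        Finset.sum_le_sum fun s _ => key s
    _ = ∑ x ∈ A, ∑ s : HyperSlot n k, ind (x ∈ s.val) := Finset.sum_comm
    _ ≤ ∑ _x ∈ A, (n : ℝ) ^ (k - 1) := Finset.sum_le_sum fun x _ => sum_slot_mem x
    _ = (A.card : ℝ) * (n : ℝ) ^ (k - 1) := by rw [Finset.sum_const, nsmul_eq_mul]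

lemma sum_slot_pair (A B : Finset (Fin n)) :
    ∑ s : HyperSlot n k, ind (∃ x ∈ A, ∃ y ∈ B, x ≠ y ∧ x ∈ s.val ∧ y ∈ s.val)
      ≤ (A.card : ℝ) * (B.card : ℝ) * (n : ℝ) ^ (k - 2) := by
  have key : ∀ s : HyperSlot n k,
      ind (∃ x ∈ A, ∃ y ∈ B, x ≠ y ∧ x ∈ s.val ∧ y ∈ s.val)
      ≤ ∑ p ∈ A ×ˢ B, ind (p.1 ≠ p.2 ∧ p.1 ∈ s.val ∧ p.2 ∈ s.val) := by
    intro s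
    by_cases h : ∃ x ∈ A, ∃ y ∈ B, x ≠ y ∧ x ∈ s.val ∧ y ∈ s.val
    · rw [ind_of h]
      obtain ⟨x, hx, y, hy, hd⟩ := h
      calc (1:ℝ) = ind ((x,y).1 ≠ (x,y).2 ∧ (x,y).1 ∈ s.val ∧ (x,y).2 ∈ s.val) :=
            (ind_of hd).symm
        _ ≤ _ := Finset.single_le_sum
            (f := fun p => ind (p.1 ≠ p.2 ∧ p.1 ∈ s.val ∧ p.2 ∈ s.val))
            (fun p _ => ind_nonneg _) (Finset.mem_product.2 ⟨hx, hy⟩)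
    · rw [ind_of_not h]
      exact Finset.sum_nonneg fun p _ => ind_nonneg _
  calc ∑ s : HyperSlot n k, ind (∃ x ∈ A, ∃ y ∈ B, x ≠ y ∧ x ∈ s.val ∧ y ∈ s.val)
      ≤ ∑ s : HyperSlot n k, ∑ p ∈ A ×ˢ B, ind (p.1 ≠ p.2 ∧ p.1 ∈ s.val ∧ p.2 ∈ s.val) :=
        Finset.sum_le_sum fun s _ => key s
    _ = ∑ p ∈ A ×ˢ B, ∑ s : HyperSlot n k, ind (p.1 ≠ p.2 ∧ p.1 ∈ s.val ∧ p.2 ∈ s.val) :=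
        Finset.sum_comm
    _ ≤ ∑ p ∈ A ×ˢ B, (n : ℝ) ^ (k - 2) := by
        apply Finset.sum_le_sum
        intro p _
        by_cases hp : p.1 = p.2
        · calc ∑ s : HyperSlot n k, ind (p.1 ≠ p.2 ∧ p.1 ∈ s.val ∧ p.2 ∈ s.val)
              = ∑ s : HyperSlot n k, (0:ℝ) :=
                Finset.sum_congr rfl fun s _ => ind_of_not (fun hc => hc.1 hp)
            _ ≤ (n : ℝ) ^ (k - 2) := by
                rw [Finset.sum_const, smul_zero]
                positivity
        · calc ∑ s : HyperSlot n k, ind (p.1 ≠ p.2 ∧ p.1 ∈ s.val ∧ p.2 ∈ s.val)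
              ≤ ∑ s : HyperSlot n k, ind (p.1 ∈ s.val ∧ p.2 ∈ s.val) :=
                Finset.sum_le_sum fun s _ => ind_mono (fun hc => hc.2)
            _ ≤ (n : ℝ) ^ (k - 2) := sum_slot_supset_pair hp
    _ = (A.card : ℝ) * (B.card : ℝ) * (n : ℝ) ^ (k - 2) := by
        rw [Finset.sum_const, Finset.card_product, nsmul_eq_mul]
        push_cast
        ring

/-! ### Chain counting -/

/-- `Chain l c` : consecutive slots in the tuple `c` share a vertex. -/
def Chain (l : ℕ) (c : Fin l → HyperSlot n k) : Prop :=
  ∀ i : ℕ, ∀ h : i + 1 < l,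
    ((c ⟨i, Nat.lt_of_succ_lt h⟩).val ∩ (c ⟨i+1, h⟩).val).Nonempty

lemma chain_snoc_iff {l : ℕ} (p : Fin (l+1) → HyperSlot n k) (x : HyperSlot n k) :
    Chain (l+2) (Fin.snoc p x) ↔
      Chain (l+1) p ∧ (((p (Fin.last l)).val ∩ x.val).Nonempty) := by
  constructor
  · intro h
    refine ⟨?_, ?_⟩
    · intro i hi
      have := h i (by omega)
      have e1 : (Fin.snoc p x : Fin (l+2) → HyperSlot n k) ⟨i, by omega⟩
          = p ⟨i, Nat.lt_of_succ_lt hi⟩ := by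
        have : (⟨i, by omega⟩ : Fin (l+2)) = Fin.castSucc ⟨i, Nat.lt_of_succ_lt hi⟩ := rfl
        rw [this, Fin.snoc_castSucc]
      have e2 : (Fin.snoc p x : Fin (l+2) → HyperSlot n k) ⟨i+1, by omega⟩
          = p ⟨i+1, hi⟩ := by
        have : (⟨i+1, by omega⟩ : Fin (l+2)) = Fin.castSucc ⟨i+1, hi⟩ := rfl
        rw [this, Fin.snoc_castSucc]
      rwa [e1, e2] at this
    · have := h l (by omega)
      have e1 : (Fin.snoc p x : Fin (l+2) → HyperSlot n k) ⟨l, by omega⟩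
          = p (Fin.last l) := by
        have : (⟨l, by omega⟩ : Fin (l+2)) = Fin.castSucc (Fin.last l) := rfl
        rw [this, Fin.snoc_castSucc]
      have e2 : (Fin.snoc p x : Fin (l+2) → HyperSlot n k) ⟨l+1, by omega⟩ = x := by
        have : (⟨l+1, by omega⟩ : Fin (l+2)) = Fin.last (l+1) := rfl
        rw [this, Fin.snoc_last]
      rwa [e1, e2] at this
  · rintro ⟨h1, h2⟩
    intro i hi
    by_cases hil : i + 1 < l + 1
    · have e1 : (Fin.snoc p x : Fin (l+2) → HyperSlot n k) ⟨i, by omega⟩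
          = p ⟨i, Nat.lt_of_succ_lt hil⟩ := by
        have : (⟨i, by omega⟩ : Fin (l+2)) = Fin.castSucc ⟨i, Nat.lt_of_succ_lt hil⟩ := rfl
        rw [this, Fin.snoc_castSucc]
      have e2 : (Fin.snoc p x : Fin (l+2) → HyperSlot n k) ⟨i+1, hi⟩
          = p ⟨i+1, hil⟩ := by
        have : (⟨i+1, hi⟩ : Fin (l+2)) = Fin.castSucc ⟨i+1, hil⟩ := rfl
        rw [this, Fin.snoc_castSucc]
      rw [e1, e2]
      exact h1 i hil
    · have hil' : i = l := by omega
      subst hil'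
      have e1 : (Fin.snoc p x : Fin (i+2) → HyperSlot n k) ⟨i, by omega⟩
          = p (Fin.last i) := by
        have : (⟨i, by omega⟩ : Fin (i+2)) = Fin.castSucc (Fin.last i) := rfl
        rw [this, Fin.snoc_castSucc]
      have e2 : (Fin.snoc p x : Fin (i+2) → HyperSlot n k) ⟨i+1, hi⟩ = x := by
        have : (⟨i+1, hi⟩ : Fin (i+2)) = Fin.last (i+1) := rfl
        rw [this, Fin.snoc_last]
      rw [e1, e2]
      exact h2

/-- Counting chains: number of `(l+1)`-tuples of slots forming a chain whose head
meets `A` is at most `|A| n^(k-1) (k n^(k-1))^l`. -/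
lemma sum_chain (A : Finset (Fin n)) : ∀ l : ℕ,
    ∑ c : Fin (l+1) → HyperSlot n k,
      ind (((c 0).val ∩ A).Nonempty ∧ Chain (l+1) c)
    ≤ ((A.card : ℝ) * (n : ℝ) ^ (k - 1)) * ((k : ℝ) * (n : ℝ) ^ (k - 1)) ^ l := by
  intro l
  induction l with
  | zero =>
    rw [pow_zero, mul_one]
    calc ∑ c : Fin 1 → HyperSlot n k, ind (((c 0).val ∩ A).Nonempty ∧ Chain 1 c)
        ≤ ∑ c : Fin 1 → HyperSlot n k, ind (((c 0).val ∩ A).Nonempty) :=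
          Finset.sum_le_sum fun c _ => ind_mono (fun h => h.1)
      _ = ∑ s : HyperSlot n k, ind ((s.val ∩ A).Nonempty) := by
          apply Fintype.sum_equiv (Equiv.funUnique (Fin 1) (HyperSlot n k))
          intro c
          rfl
      _ ≤ (A.card : ℝ) * (n : ℝ) ^ (k - 1) := sum_slot_meet A
  | succ l ih =>
    have heq := Fintype.sum_equiv (Fin.snocEquiv (fun _ : Fin (l+2) => HyperSlot n k))
      (fun pr : HyperSlot n k × (Fin (l+1) → HyperSlot n k) =>
        ind ((((Fin.snoc pr.2 pr.1 : Fin (l+2) → HyperSlot n k) 0).val ∩ A).Nonempty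
          ∧ Chain (l+2) (Fin.snoc pr.2 pr.1)))
      (fun c : Fin (l+2) → HyperSlot n k => ind (((c 0).val ∩ A).Nonempty ∧ Chain (l+2) c))
      (fun pr => rfl)
    rw [← heq, Fintype.sum_prod_type]
    have key : ∀ x : HyperSlot n k, ∀ p : Fin (l+1) → HyperSlot n k,
        ind ((((Fin.snoc p x : Fin (l+2) → HyperSlot n k) 0).val ∩ A).Nonempty
          ∧ Chain (l+2) (Fin.snoc p x))
        ≤ ind (((p 0).val ∩ A).Nonempty ∧ Chain (l+1) p)
          * ind (((p (Fin.last l)).val ∩ x.val).Nonempty) := by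
      intro x p
      apply ind_le_mul
      intro hyp
      have hhead : (Fin.snoc p x : Fin (l+2) → HyperSlot n k) 0 = p 0 := by
        have : (0 : Fin (l+2)) = Fin.castSucc (0 : Fin (l+1)) := rfl
        rw [this, Fin.snoc_castSucc]
      rw [hhead] at hyp
      obtain ⟨h0, hch⟩ := hyp
      rw [chain_snoc_iff] at hch
      exact ⟨⟨h0, hch.1⟩, hch.2⟩
    calc ∑ x : HyperSlot n k, ∑ p : Fin (l+1) → HyperSlot n k,
        ind ((((Fin.snoc p x : Fin (l+2) → HyperSlot n k) 0).val ∩ A).Nonempty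
          ∧ Chain (l+2) (Fin.snoc p x))
        ≤ ∑ x : HyperSlot n k, ∑ p : Fin (l+1) → HyperSlot n k,
          ind (((p 0).val ∩ A).Nonempty ∧ Chain (l+1) p)
            * ind (((p (Fin.last l)).val ∩ x.val).Nonempty) :=
          Finset.sum_le_sum fun x _ => Finset.sum_le_sum fun p _ => key x p
      _ = ∑ p : Fin (l+1) → HyperSlot n k,
          ind (((p 0).val ∩ A).Nonempty ∧ Chain (l+1) p)
            * ∑ x : HyperSlot n k, ind (((p (Fin.last l)).val ∩ x.val).Nonempty) := by
          rw [Finset.sum_comm]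
          apply Finset.sum_congr rfl
          intro p _
          rw [Finset.mul_sum]
      _ ≤ ∑ p : Fin (l+1) → HyperSlot n k,
          ind (((p 0).val ∩ A).Nonempty ∧ Chain (l+1) p)
            * ((k:ℝ) * (n:ℝ) ^ (k-1)) := by
          apply Finset.sum_le_sum
          intro p _
          apply mul_le_mul_of_nonneg_left _ (ind_nonneg _)
          have : ∑ x : HyperSlot n k, ind (((p (Fin.last l)).val ∩ x.val).Nonempty)
              ≤ ((p (Fin.last l)).val.card : ℝ) * (n:ℝ) ^ (k-1) := by
            have h2 := sum_slot_meet (n := n) (k := k) ((p (Fin.last l)).val)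
            calc ∑ x : HyperSlot n k, ind (((p (Fin.last l)).val ∩ x.val).Nonempty)
                = ∑ x : HyperSlot n k, ind ((x.val ∩ (p (Fin.last l)).val).Nonempty) := by
                  apply Finset.sum_congr rfl
                  intro x _
                  rw [Finset.inter_comm]
              _ ≤ _ := h2
          rwa [(p (Fin.last l)).2] at this
      _ = (∑ p : Fin (l+1) → HyperSlot n k,
          ind (((p 0).val ∩ A).Nonempty ∧ Chain (l+1) p)) * ((k:ℝ) * (n:ℝ) ^ (k-1)) := by
          rw [← Finset.sum_mul]
      _ ≤ (((A.card : ℝ) * (n : ℝ) ^ (k - 1)) * ((k : ℝ) * (n : ℝ) ^ (k - 1)) ^ l)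
            * ((k:ℝ) * (n:ℝ) ^ (k-1)) := by
          apply mul_le_mul_of_nonneg_right ih
          positivity
      _ = ((A.card : ℝ) * (n : ℝ) ^ (k - 1)) * ((k : ℝ) * (n : ℝ) ^ (k - 1)) ^ (l+1) := by
          ring


/-! ### Walks -/

/-- A walk of length `j` from the vertex set `A`, encoded by functions on `ℕ`. -/
def IsWalkN {n : ℕ} (E : Finset (Multiset (Fin n))) (A : Finset (Fin n)) (j : ℕ)
    (u : ℕ → Fin n) (g : ℕ → Multiset (Fin n)) : Prop :=
  u 0 ∈ A ∧ ∀ i < j, g i ∈ E ∧ u i ∈ g i ∧ u (i+1) ∈ g i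

variable {n k : ℕ}

lemma walk_of_distLE {E : Finset (Multiset (Fin n))} {A : Finset (Fin n)} :
    ∀ {m : ℕ} {v : Fin n}, distLE E A m v →
      ∃ j ≤ m, ∃ u g, IsWalkN E A j u g ∧ u j = v := by
  intro m
  induction m with
  | zero =>
    intro v hv
    exact ⟨0, le_rfl, fun _ => v, fun _ => 0, ⟨hv, fun i hi => by omega⟩, rfl⟩
  | succ m ih =>
    intro v hv
    rcases hv with hv | ⟨e, he, hve, u', hu'e, hu'⟩
    · obtain ⟨j, hj, u, g, hw, hend⟩ := ih hv
      exact ⟨j, by omega, u, g, hw, hend⟩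
    · obtain ⟨j, hj, u, g, hw, hend⟩ := ih hu'
      refine ⟨j+1, by omega, fun i => if i ≤ j then u i else v,
        fun i => if i < j then g i else e, ⟨?_, ?_⟩, ?_⟩
      · simp only [if_pos (Nat.zero_le j)]
        exact hw.1
      · intro i hi
        by_cases hij : i < j
        · have h1 : i ≤ j := by omega
          have h2 : i + 1 ≤ j := by omega
          simp only [if_pos hij, if_pos h1, if_pos h2]
          exact hw.2 i hij
        · have hij' : i = j := by omega
          subst hij'
          simp only [if_neg hij, if_pos (le_refl i), if_neg (by omega : ¬ i + 1 ≤ i)]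
          refine ⟨he, ?_, hve⟩
          rw [hend]
          exact hu'e
      · simp only [if_neg (by omega : ¬ j + 1 ≤ j)]

/-- Minimal walks reaching a target set `C` have distinct edges, and avoid `C`
before the final step. -/
lemma min_walk {E : Finset (Multiset (Fin n))} {A C : Finset (Fin n)} {r : ℕ}
    (h : ∃ j ≤ r, ∃ u g, IsWalkN E A j u g ∧ u j ∈ C) :
    ∃ j ≤ r, ∃ u g, IsWalkN E A j u g ∧ u j ∈ C ∧
      (∀ i < j, u i ∉ C) ∧ (∀ a < j, ∀ b < j, a ≠ b → g a ≠ g b) := by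
  classical
  set P : ℕ → Prop := fun j => ∃ u g, IsWalkN E A j u g ∧ u j ∈ C with hP
  obtain ⟨j₁, hj₁r, u₁, g₁, hw₁, hc₁⟩ := h
  have hex : ∃ j, P j := ⟨j₁, u₁, g₁, hw₁, hc₁⟩
  haveI : DecidablePred P := Classical.decPred P
  set j := Nat.find hex with hj
  have hPj : P j := Nat.find_spec hex
  have hmin : ∀ j' < j, ¬ P j' := fun j' hj' => Nat.find_min hex hj'
  have hjr : j ≤ r := le_trans (Nat.find_min' hex ⟨u₁, g₁, hw₁, hc₁⟩) hj₁r
  obtain ⟨u, g, hw, hc⟩ := hPj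
  refine ⟨j, hjr, u, g, hw, hc, ?_, ?_⟩
  · intro i hi hui
    exact hmin i hi ⟨u, g, ⟨hw.1, fun i' hi' => hw.2 i' (by omega)⟩, hui⟩
  · intro a ha b hb hab hgab
    -- wlog a < b
    rcases Nat.lt_or_ge a b with hlt | hge
    case _ =>
      apply hmin (j - (b - a)) (by omega)
      refine ⟨fun i => if i ≤ a then u i else u (i + (b - a)),
        fun i => if i ≤ a then g i else g (i + (b - a)), ⟨?_, ?_⟩, ?_⟩
      · simp only [if_pos (Nat.zero_le a)]; exact hw.1
      · intro i hi
        by_cases hia : i < a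
        · simp only [if_pos (le_of_lt hia), if_pos (Nat.succ_le_of_lt hia)]
          exact hw.2 i (by omega)
        · by_cases hia' : i = a
          · subst hia'
            simp only [if_pos (le_refl i), if_neg (by omega : ¬ i + 1 ≤ i)]
            have hb' : i + 1 + (b - i) = b + 1 := by omega
            rw [hb']
            have := hw.2 i (by omega)
            have hgb := hw.2 b hb
            exact ⟨this.1, this.2.1, by rw [hgab]; exact hgb.2.2⟩
          · have h1 : ¬ i ≤ a := by omega
            simp only [if_neg h1, if_neg (by omega : ¬ i + 1 ≤ a)]
            have : i + 1 + (b - a) = (i + (b - a)) + 1 := by omega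
            rw [this]
            exact hw.2 (i + (b - a)) (by omega)
      · by_cases hja : j - (b - a) ≤ a
        ·
          have : j - (b - a) = a := by omega
          rw [this]
          simp only [if_pos (le_refl a)]
          -- then j = b? j - (b-a) = a means j = b (since j ≥ b). but b < j strict. contradiction
          omega
        · simp only [if_neg hja]
          have : j - (b - a) + (b - a) = j := by omega
          rw [this]
          exact hc
    case _ =>
      have hlt : b < a := by omega
      apply hmin (j - (a - b)) (by omega)
      refine ⟨fun i => if i ≤ b then u i else u (i + (a - b)),
        fun i => if i ≤ b then g i else g (i + (a - b)), ⟨?_, ?_⟩, ?_⟩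
      · simp only [if_pos (Nat.zero_le b)]; exact hw.1
      · intro i hi
        by_cases hib : i < b
        · simp only [if_pos (le_of_lt hib), if_pos (Nat.succ_le_of_lt hib)]
          exact hw.2 i (by omega)
        · by_cases hib' : i = b
          · subst hib'
            simp only [if_pos (le_refl i), if_neg (by omega : ¬ i + 1 ≤ i)]
            have ha' : i + 1 + (a - i) = a + 1 := by omega
            rw [ha']
            have := hw.2 i (by omega)
            have hga := hw.2 a ha
            exact ⟨this.1, this.2.1, by rw [← hgab]; exact hga.2.2⟩
          · have h1 : ¬ i ≤ b := by omega
            simp only [if_neg h1, if_neg (by omega : ¬ i + 1 ≤ b)]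
            have : i + 1 + (a - b) = (i + (a - b)) + 1 := by omega
            rw [this]
            exact hw.2 (i + (a - b)) (by omega)
      · by_cases hjb : j - (a - b) ≤ b
        · have : j - (a - b) = b := by omega
          rw [this]
          simp only [if_pos (le_refl b)]
          omega
        · simp only [if_neg hjb]
          have : j - (a - b) + (a - b) = j := by omega
          rw [this]
          exact hc

/-! ### Bridging to the hypergraph -/

lemma mem_edges_iff {f : HyperSlot n k → Bool} {e : Multiset (Fin n)} :
    e ∈ (hyperOf n k f).edges ↔ ∃ s : HyperSlot n k, f s = true ∧ s.val.val = e := by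
  simp only [hyperOf, Finset.mem_image, Finset.mem_filter, Finset.mem_univ, true_and]

lemma mem_slot_of {s : HyperSlot n k} {e : Multiset (Fin n)} (h : s.val.val = e)
    {x : Fin n} (hx : x ∈ e) : x ∈ s.val := by
  rw [Finset.mem_def, h]; exact hx

/-! ### W certificates: walks witnessing the ball -/

def StructW (T : Finset (Fin n)) (m' : ℕ)
    (cv : (Fin (m'+1) → HyperSlot n k) × Fin n) : Prop :=
  (((cv.1 0).val ∩ T).Nonempty ∧ Chain (m'+1) cv.1 ∧ cv.2 ∈ (cv.1 (Fin.last m')).val)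
    ∧ Function.Injective cv.1

lemma exists_Wcert {f : HyperSlot n k → Bool} {T : Finset (Fin n)} {r : ℕ} {v : Fin n}
    (hv : distLE (hyperOf n k f).edges T r v) (hvT : v ∉ T) :
    ∃ m' < r, ∃ c : Fin (m'+1) → HyperSlot n k,
      StructW T m' (c, v) ∧ ∀ i, f (c i) = true := by
  obtain ⟨j₀, hj₀, u₀, g₀, hw₀, hend₀⟩ := walk_of_distLE hv
  have hmw : ∃ j ≤ r, ∃ u g, IsWalkN (hyperOf n k f).edges T j u g ∧ u j ∈ ({v} : Finset (Fin n)) :=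
    ⟨j₀, hj₀, u₀, g₀, hw₀, by rw [hend₀]; exact Finset.mem_singleton_self v⟩
  obtain ⟨j, hjr, u, g, hw, hc, hint, hdist⟩ := min_walk hmw
  rw [Finset.mem_singleton] at hc
  have hj1 : 1 ≤ j := by
    by_contra h
    have hj0 : j = 0 := by omega
    subst hj0
    exact hvT (hc ▸ hw.1)
  obtain ⟨m', rfl⟩ : ∃ m', j = m' + 1 := ⟨j - 1, by omega⟩
  have hslots : ∀ i : Fin (m'+1), ∃ s : HyperSlot n k, f s = true ∧ s.val.val = g i.val :=
    fun i => mem_edges_iff.1 (hw.2 i.val i.isLt).1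
  choose c hc1 hc2 using hslots
  refine ⟨m', by omega, c, ⟨⟨?_, ?_, ?_⟩, ?_⟩, hc1⟩
  · exact ⟨u 0, Finset.mem_inter.2 ⟨mem_slot_of (hc2 0) (hw.2 0 (by omega)).2.1, hw.1⟩⟩
  · intro i hi
    refine ⟨u (i+1), Finset.mem_inter.2 ⟨?_, ?_⟩⟩
    · exact mem_slot_of (hc2 ⟨i, by omega⟩) (hw.2 i (by omega)).2.2
    · exact mem_slot_of (hc2 ⟨i+1, hi⟩) (hw.2 (i+1) (by omega)).2.1
  · have : u (m'+1) ∈ g m' := (hw.2 m' (by omega)).2.2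
    rw [hc] at this
    exact mem_slot_of (hc2 (Fin.last m')) this
  · intro i1 i2 h12
    by_contra hne
    have h12' : c i1 = c i2 := h12
    have : g i1.val = g i2.val := by
      rw [← hc2 i1, ← hc2 i2, h12']
    exact hdist i1.val i1.isLt i2.val i2.isLt (fun hv => hne (Fin.ext hv)) this

lemma sum_structW (T : Finset (Fin n)) (m' : ℕ) :
    ∑ cv : (Fin (m'+1) → HyperSlot n k) × Fin n, ind (StructW T m' cv)
      ≤ (((T.card : ℝ) * (n : ℝ) ^ (k - 1)) * ((k : ℝ) * (n : ℝ) ^ (k - 1)) ^ m') * (k : ℝ) := by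
  rw [Fintype.sum_prod_type]
  calc ∑ c : Fin (m'+1) → HyperSlot n k, ∑ v : Fin n, ind (StructW T m' (c, v))
      ≤ ∑ c : Fin (m'+1) → HyperSlot n k, ∑ v : Fin n,
          ind (((c 0).val ∩ T).Nonempty ∧ Chain (m'+1) c) * ind (v ∈ (c (Fin.last m')).val) :=
        Finset.sum_le_sum fun c _ => Finset.sum_le_sum fun v _ =>
          ind_le_mul (fun h => ⟨⟨h.1.1, h.1.2.1⟩, h.1.2.2⟩)
    _ = ∑ c : Fin (m'+1) → HyperSlot n k,
          ind (((c 0).val ∩ T).Nonempty ∧ Chain (m'+1) c)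
            * ∑ v : Fin n, ind (v ∈ (c (Fin.last m')).val) := by
        apply Finset.sum_congr rfl
        intro c _
        rw [Finset.mul_sum]
    _ ≤ ∑ c : Fin (m'+1) → HyperSlot n k,
          ind (((c 0).val ∩ T).Nonempty ∧ Chain (m'+1) c) * (k:ℝ) := by
        apply Finset.sum_le_sum
        intro c _
        apply mul_le_mul_of_nonneg_left _ (ind_nonneg _)
        rw [sum_ind_mem_card]
        rw [(c (Fin.last m')).2]
    _ = (∑ c : Fin (m'+1) → HyperSlot n k,
          ind (((c 0).val ∩ T).Nonempty ∧ Chain (m'+1) c)) * (k:ℝ) := by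
        rw [← Finset.sum_mul]
    _ ≤ (((T.card : ℝ) * (n : ℝ) ^ (k - 1)) * ((k : ℝ) * (n : ℝ) ^ (k - 1)) ^ m') * (k : ℝ) := by
        apply mul_le_mul_of_nonneg_right (sum_chain T m') (by positivity)

/-! ### B certificates: a walk from `T` attached to a cycle -/

def StructB (T : Finset (Fin n)) (j m' : ℕ)
    (c : Fin (j + m' + 2) → HyperSlot n k) : Prop :=
  (((c ⟨0, by omega⟩).val ∩ T).Nonempty
    ∧ Chain (j + m' + 1) (fun i : Fin (j + m' + 1) => c ⟨i.val, by omega⟩)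
    ∧ (∃ x y : Fin n, x ≠ y
        ∧ x ∈ (c ⟨j + m' + 1, by omega⟩).val ∧ x ∈ (c ⟨j + m', by omega⟩).val
        ∧ y ∈ (c ⟨j + m' + 1, by omega⟩).val ∧ y ∈ (c ⟨j, by omega⟩).val))
    ∧ Function.Injective c

lemma sum_structB (T : Finset (Fin n)) (j m' : ℕ) :
    ∑ c : Fin (j + m' + 2) → HyperSlot n k, ind (StructB T j m' c)
      ≤ (((T.card : ℝ) * (n : ℝ) ^ (k - 1)) * ((k : ℝ) * (n : ℝ) ^ (k - 1)) ^ (j + m'))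
          * ((k : ℝ) * (k : ℝ) * (n : ℝ) ^ (k - 2)) := by
  have heq := Fintype.sum_equiv (Fin.snocEquiv (fun _ : Fin (j + m' + 2) => HyperSlot n k))
    (fun pr : HyperSlot n k × (Fin (j + m' + 1) → HyperSlot n k) =>
      ind (StructB T j m' (Fin.snoc pr.2 pr.1)))
    (fun c : Fin (j + m' + 2) → HyperSlot n k => ind (StructB T j m' c))
    (fun pr => rfl)
  rw [← heq, Fintype.sum_prod_type]
  have hlast : ∀ (p : Fin (j + m' + 1) → HyperSlot n k) (x : HyperSlot n k),
      (Fin.snoc p x : Fin (j + m' + 2) → HyperSlot n k) ⟨j + m' + 1, by omega⟩ = x := by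
    intro p x
    have : (⟨j + m' + 1, by omega⟩ : Fin (j + m' + 2)) = Fin.last (j + m' + 1) := rfl
    rw [this, Fin.snoc_last]
  have hcast : ∀ (p : Fin (j + m' + 1) → HyperSlot n k) (x : HyperSlot n k)
      (i : ℕ) (h : i < j + m' + 1),
      (Fin.snoc p x : Fin (j + m' + 2) → HyperSlot n k) ⟨i, by omega⟩ = p ⟨i, h⟩ := by
    intro p x i h
    have : (⟨i, by omega⟩ : Fin (j + m' + 2)) = Fin.castSucc ⟨i, h⟩ := rfl
    rw [this, Fin.snoc_castSucc]
  have key : ∀ (x : HyperSlot n k) (p : Fin (j + m' + 1) → HyperSlot n k),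
      ind (StructB T j m' (Fin.snoc p x))
      ≤ ind (((p 0).val ∩ T).Nonempty ∧ Chain (j + m' + 1) p)
        * ind (∃ a ∈ (p ⟨j + m', by omega⟩).val, ∃ b ∈ (p ⟨j, by omega⟩).val,
            a ≠ b ∧ a ∈ x.val ∧ b ∈ x.val) := by
    intro x p
    apply ind_le_mul
    rintro ⟨⟨h0, hch, hcl⟩, -⟩
    refine ⟨⟨?_, ?_⟩, ?_⟩
    · rwa [hcast p x 0 (by omega)] at h0
    · intro i hi
      have h2 : (((Fin.snoc p x : Fin (j + m' + 2) → HyperSlot n k) ⟨i, by omega⟩).val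
          ∩ ((Fin.snoc p x : Fin (j + m' + 2) → HyperSlot n k) ⟨i+1, by omega⟩).val).Nonempty :=
        hch i hi
      rwa [hcast p x i (by omega), hcast p x (i+1) (by omega)] at h2
    · obtain ⟨a, b, hab, ha1, ha2, hb1, hb2⟩ := hcl
      rw [hlast p x] at ha1 hb1
      rw [hcast p x (j + m') (by omega)] at ha2
      rw [hcast p x j (by omega)] at hb2
      exact ⟨a, ha2, b, hb2, hab, ha1, hb1⟩
  calc ∑ x : HyperSlot n k, ∑ p : Fin (j + m' + 1) → HyperSlot n k,
        ind (StructB T j m' (Fin.snoc p x))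
      ≤ ∑ x : HyperSlot n k, ∑ p : Fin (j + m' + 1) → HyperSlot n k,
        ind (((p 0).val ∩ T).Nonempty ∧ Chain (j + m' + 1) p)
          * ind (∃ a ∈ (p ⟨j + m', by omega⟩).val, ∃ b ∈ (p ⟨j, by omega⟩).val,
              a ≠ b ∧ a ∈ x.val ∧ b ∈ x.val) :=
        Finset.sum_le_sum fun x _ => Finset.sum_le_sum fun p _ => key x p
    _ = ∑ p : Fin (j + m' + 1) → HyperSlot n k,
        ind (((p 0).val ∩ T).Nonempty ∧ Chain (j + m' + 1) p)
          * ∑ x : HyperSlot n k, ind (∃ a ∈ (p ⟨j + m', by omega⟩).val,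
              ∃ b ∈ (p ⟨j, by omega⟩).val, a ≠ b ∧ a ∈ x.val ∧ b ∈ x.val) := by
        rw [Finset.sum_comm]
        apply Finset.sum_congr rfl
        intro p _
        rw [Finset.mul_sum]
    _ ≤ ∑ p : Fin (j + m' + 1) → HyperSlot n k,
        ind (((p 0).val ∩ T).Nonempty ∧ Chain (j + m' + 1) p)
          * ((k : ℝ) * (k : ℝ) * (n : ℝ) ^ (k - 2)) := by
        apply Finset.sum_le_sum
        intro p _
        apply mul_le_mul_of_nonneg_left _ (ind_nonneg _)
        have := sum_slot_pair (n := n) (k := k)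
          ((p ⟨j + m', by omega⟩).val) ((p ⟨j, by omega⟩).val)
        rw [(p ⟨j + m', by omega⟩).2, (p ⟨j, by omega⟩).2] at this
        exact this
    _ = (∑ p : Fin (j + m' + 1) → HyperSlot n k,
        ind (((p 0).val ∩ T).Nonempty ∧ Chain (j + m' + 1) p))
          * ((k : ℝ) * (k : ℝ) * (n : ℝ) ^ (k - 2)) := by
        rw [← Finset.sum_mul]
    _ ≤ _ := by
        apply mul_le_mul_of_nonneg_right (sum_chain T (j + m')) (by positivity)

open Fin.NatCast in
lemma exists_Bcert {f : HyperSlot n k → Bool} {T : Finset (Fin n)} {r L m : ℕ}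
    {v : Fin (m+1) → Fin n} {e : Fin m → Multiset (Fin n)}
    (hcyc : (hyperOf n k f).IsCycle m v e)
    (hall : ∀ i : Fin m, ∀ u ∈ e i, distLE (hyperOf n k f).edges T r u)
    (hball : (Finset.univ.filter fun x : Fin n =>
        distLE (hyperOf n k f).edges T r x).card ≤ L) :
    ∃ j ≤ r, ∃ m', m' + 2 ≤ L ∧ ∃ c : Fin (j + m' + 2) → HyperSlot n k,
      StructB T j m' c ∧ ∀ i, f (c i) = true := by
  obtain ⟨hm2, hmem, hinj, hvinj, hvlast, hinc⟩ := hcyc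
  obtain ⟨m', rfl⟩ : ∃ m', m = m' + 2 := ⟨m - 2, by omega⟩
  set V : Fin (m'+2) → Fin n := fun i => v i.castSucc with hV
  have hsucc : ∀ i : Fin (m'+2), v i.succ = V (i+1) := by
    intro i
    by_cases h : i = Fin.last (m'+1)
    · subst h
      have h1 : (Fin.last (m'+1)).succ = Fin.last (m'+2) := rfl
      have h2 : (Fin.last (m'+1) + 1 : Fin (m'+2)) = 0 := by
        apply Fin.ext
        rw [Fin.val_add_one]
        simp
      rw [h1, h2, hvlast, hV]
      simp
    · have h2 : (i + 1 : Fin (m'+2)).val = i.val + 1 := by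
        rw [Fin.val_add_one, if_neg h]
      rw [hV]
      congr 1
      apply Fin.ext
      rw [Fin.val_succ, Fin.coe_castSucc, h2]
  have hVinc : ∀ i : Fin (m'+2), V i ∈ e i ∧ V (i+1) ∈ e i :=
    fun i => ⟨(hinc i).1, (hsucc i) ▸ (hinc i).2⟩
  have hVinj : Function.Injective V := by
    intro i1 i2 h
    exact hvinj i1 i2 h
  -- m' + 2 ≤ L
  have hmL : m' + 2 ≤ L := by
    have hc : (Finset.univ : Finset (Fin (m'+2))).card
        ≤ (Finset.univ.filter fun x : Fin n =>
            distLE (hyperOf n k f).edges T r x).card := by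
      apply Finset.card_le_card_of_injOn V
      · intro i _
        rw [Finset.mem_coe, Finset.mem_filter]
        exact ⟨Finset.mem_univ _, hall i (V i) (hVinc i).1⟩
      · intro i1 _ i2 _ h
        exact hVinj h
    rw [Finset.card_univ, Fintype.card_fin] at hc
    omega
  -- the target set of vertices of cycle edges
  set CC : Finset (Fin n) :=
    Finset.univ.filter (fun x : Fin n => ∃ i : Fin (m'+2), x ∈ e i) with hCC
  have hmemCC : ∀ (x : Fin n) (i : Fin (m'+2)), x ∈ e i → x ∈ CC := by
    intro x i hx
    rw [hCC, Finset.mem_filter]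
    exact ⟨Finset.mem_univ _, i, hx⟩
  -- a minimal walk from T to CC
  obtain ⟨j₀, hj₀, u₀, g₀, hw₀, hend₀⟩ := walk_of_distLE (hall 0 (V 0) (hVinc 0).1)
  have hmw : ∃ j ≤ r, ∃ u g, IsWalkN (hyperOf n k f).edges T j u g ∧ u j ∈ CC :=
    ⟨j₀, hj₀, u₀, g₀, hw₀, by rw [hend₀]; exact hmemCC _ 0 (hVinc 0).1⟩
  obtain ⟨j, hjr, u, g, hw, hc, hint, hdist⟩ := min_walk hmw
  obtain ⟨a, hua⟩ : ∃ a : Fin (m'+2), u j ∈ e a := by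
    rw [hCC, Finset.mem_filter] at hc
    exact hc.2
  -- the combined edge sequence
  set Eg : ℕ → Multiset (Fin n) :=
    fun i => if i < j then g i else e (a + ((i - j : ℕ) : Fin (m'+2))) with hEg
  have hslots : ∀ i : Fin (j + m' + 2),
      ∃ s : HyperSlot n k, f s = true ∧ s.val.val = Eg i.val := by
    intro i
    by_cases h : i.val < j
    · rw [hEg]
      simp only [if_pos h]
      exact mem_edges_iff.1 (hw.2 i.val h).1
    · rw [hEg]
      simp only [if_neg h]
      exact mem_edges_iff.1 (hmem _)
  choose c hc1 hc2 using hslots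
  have hcycEg : ∀ i : ℕ, ¬ i < j → Eg i = e (a + ((i - j : ℕ) : Fin (m'+2))) := by
    intro i h
    rw [hEg]
    simp only [if_neg h]
  have hgEg : ∀ i : ℕ, i < j → Eg i = g i := by
    intro i h
    rw [hEg]
    simp only [if_pos h]
  refine ⟨j, hjr, m', hmL, c, ⟨⟨?_, ?_, ?_⟩, ?_⟩, hc1⟩
  · -- head meets T
    refine ⟨u 0, Finset.mem_inter.2 ⟨?_, hw.1⟩⟩
    apply mem_slot_of (hc2 ⟨0, by omega⟩)
    by_cases h : 0 < j
    · rw [hgEg 0 h]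
      exact (hw.2 0 h).2.1
    · have hj0 : j = 0 := by omega
      rw [hcycEg 0 (by omega)]
      have : ((0 - j : ℕ) : Fin (m'+2)) = 0 := by rw [hj0]; simp
      rw [this, add_zero]
      rw [← hj0]
      exact hua
  · -- chain
    intro i hi
    show ((c ⟨i, by omega⟩).val ∩ (c ⟨i+1, by omega⟩).val).Nonempty
    by_cases h1 : i + 1 < j
    · refine ⟨u (i+1), Finset.mem_inter.2 ⟨?_, ?_⟩⟩
      · apply mem_slot_of (hc2 ⟨i, by omega⟩)
        rw [hgEg i (by omega)]
        exact (hw.2 i (by omega)).2.2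
      · apply mem_slot_of (hc2 ⟨i+1, by omega⟩)
        rw [hgEg (i+1) h1]
        exact (hw.2 (i+1) h1).2.1
    · by_cases h2 : i + 1 = j
      · refine ⟨u j, Finset.mem_inter.2 ⟨?_, ?_⟩⟩
        · apply mem_slot_of (hc2 ⟨i, by omega⟩)
          rw [hgEg i (by omega)]
          have := (hw.2 i (by omega)).2.2
          rwa [h2] at this
        · apply mem_slot_of (hc2 ⟨i+1, by omega⟩)
          rw [hcycEg (i+1) (by omega)]
          have : ((i + 1 - j : ℕ) : Fin (m'+2)) = 0 := by rw [h2]; simp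
          rw [this, add_zero]
          exact hua
      · -- both in the cycle part
        have hji : j ≤ i := by omega
        refine ⟨V (a + ((i - j : ℕ) : Fin (m'+2)) + 1), Finset.mem_inter.2 ⟨?_, ?_⟩⟩
        · apply mem_slot_of (hc2 ⟨i, by omega⟩)
          rw [hcycEg i (by omega)]
          exact (hVinc _).2
        · apply mem_slot_of (hc2 ⟨i+1, by omega⟩)
          rw [hcycEg (i+1) (by omega)]
          have : ((i + 1 - j : ℕ) : Fin (m'+2)) = ((i - j : ℕ) : Fin (m'+2)) + 1 := by
            have hna : i + 1 - j = (i - j) + 1 := by omega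
            rw [hna]
            push_cast
            ring
          rw [this, ← add_assoc]
          exact (hVinc _).1
  · -- closing
    set w1 : Fin (m'+2) := a + ((m' + 1 : ℕ) : Fin (m'+2)) with hw1
    refine ⟨V w1, V (w1 + 1), ?_, ?_, ?_, ?_, ?_⟩
    · intro hxy
      have := hVinj hxy
      have : (1 : Fin (m'+2)) = 0 := by
        have h0 := left_eq_add.1 this
        exact h0
      simp at this
    · apply mem_slot_of (hc2 ⟨j + m' + 1, by omega⟩)
      rw [hcycEg (j + m' + 1) (by omega)]
      have : ((j + m' + 1 - j : ℕ) : Fin (m'+2)) = ((m' + 1 : ℕ) : Fin (m'+2)) := by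
        congr 1
        omega
      rw [this, ← hw1]
      exact (hVinc w1).1
    · apply mem_slot_of (hc2 ⟨j + m', by omega⟩)
      rw [hcycEg (j + m') (by omega)]
      have he1 : ((j + m' - j : ℕ) : Fin (m'+2)) = ((m' : ℕ) : Fin (m'+2)) := by
        congr 1
        omega
      rw [he1]
      have he2 : a + ((m' : ℕ) : Fin (m'+2)) + 1 = w1 := by
        rw [hw1, add_assoc]
        congr 1
        push_cast
        ring
      have := (hVinc (a + ((m' : ℕ) : Fin (m'+2)))).2
      rwa [he2] at this
    · apply mem_slot_of (hc2 ⟨j + m' + 1, by omega⟩)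
      rw [hcycEg (j + m' + 1) (by omega)]
      have : ((j + m' + 1 - j : ℕ) : Fin (m'+2)) = ((m' + 1 : ℕ) : Fin (m'+2)) := by
        congr 1
        omega
      rw [this, ← hw1]
      exact (hVinc w1).2
    · apply mem_slot_of (hc2 ⟨j, by omega⟩)
      rw [hcycEg j (by omega)]
      have he0 : ((j - j : ℕ) : Fin (m'+2)) = 0 := by
        rw [Nat.sub_self]
        simp
      rw [he0, add_zero]
      have he3 : w1 + 1 = a := by
        rw [hw1, add_assoc]
        have : ((m' + 1 : ℕ) : Fin (m'+2)) + 1 = 0 := by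
          have : ((m' + 1 : ℕ) : Fin (m'+2)) + 1 = ((m' + 2 : ℕ) : Fin (m'+2)) := by
            exact (Nat.cast_succ (m'+1)).symm
          rw [this]
          exact Fin.natCast_self (m'+2)
        rw [this, add_zero]
      rw [he3]
      exact (hVinc a).1
  · -- injectivity
    intro i1 i2 h12
    have hEq : Eg i1.val = Eg i2.val := by
      rw [← hc2 i1, ← hc2 i2, h12]
    by_cases ha1 : i1.val < j <;> by_cases ha2 : i2.val < j
    · -- both walk edges
      by_contra hne
      rw [hgEg i1.val ha1, hgEg i2.val ha2] at hEq
      exact hdist i1.val (by omega) i2.val (by omega) (fun h => hne (Fin.ext h)) hEq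
    · -- i1 walk, i2 cycle: contradiction with interior avoidance
      exfalso
      rw [hgEg i1.val ha1, hcycEg i2.val ha2] at hEq
      apply hint i1.val ha1
      apply hmemCC _ (a + ((i2.val - j : ℕ) : Fin (m'+2)))
      rw [← hEq]
      exact (hw.2 i1.val ha1).2.1
    · exfalso
      rw [hcycEg i1.val ha1, hgEg i2.val ha2] at hEq
      apply hint i2.val ha2
      apply hmemCC _ (a + ((i1.val - j : ℕ) : Fin (m'+2)))
      rw [hEq]
      exact (hw.2 i2.val ha2).2.1
    · -- both cycle edges
      rw [hcycEg i1.val ha1, hcycEg i2.val ha2] at hEq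
      have := hinj hEq
      have hadd := add_left_cancel this
      have hval := congrArg Fin.val hadd
      rw [Fin.val_natCast, Fin.val_natCast] at hval
      have hb1 : i1.val - j < m' + 2 := by omega
      have hb2 : i2.val - j < m' + 2 := by omega
      rw [Nat.mod_eq_of_lt hb1, Nat.mod_eq_of_lt hb2] at hval
      apply Fin.ext
      omega

/-! ### Expectation bounds for the three bad events -/

lemma expect_badA {q : ℝ} (hq0 : 0 ≤ q) (hq1 : q ≤ 1) (Tv : Finset (Fin n)) :
    ∑ f : HyperSlot n k → Bool,
      mu q f * ind (¬ ∀ s : HyperSlot n k, f s = true → (s.val ∩ Tv).card ≤ 1)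
    ≤ ((Tv.card : ℝ) * (Tv.card : ℝ) * (n : ℝ) ^ (k - 2)) * q := by
  calc ∑ f : HyperSlot n k → Bool,
      mu q f * ind (¬ ∀ s : HyperSlot n k, f s = true → (s.val ∩ Tv).card ≤ 1)
      ≤ ∑ f : HyperSlot n k → Bool,
        mu q f * ind (∃ s : HyperSlot n k,
          (∃ x ∈ Tv, ∃ y ∈ Tv, x ≠ y ∧ x ∈ s.val ∧ y ∈ s.val)
          ∧ ∀ s' ∈ ({s} : Finset (HyperSlot n k)), f s' = true) := by
        apply Finset.sum_le_sum
        intro f _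
        apply mul_le_mul_of_nonneg_left _ (mu_nonneg hq0 hq1 f)
        apply ind_mono
        intro h
        push_neg at h
        obtain ⟨s, hfs, hcard⟩ := h
        obtain ⟨x, hx, y, hy, hxy⟩ := Finset.one_lt_card.1 hcard
        rw [Finset.mem_inter] at hx hy
        refine ⟨s, ⟨x, hx.2, y, hy.2, hxy, hx.1, hy.1⟩, ?_⟩
        intro s' hs'
        rw [Finset.mem_singleton] at hs'
        rw [hs']
        exact hfs
    _ ≤ ∑ s : HyperSlot n k,
        ind (∃ x ∈ Tv, ∃ y ∈ Tv, x ≠ y ∧ x ∈ s.val ∧ y ∈ s.val)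
          * q ^ ({s} : Finset (HyperSlot n k)).card :=
        expect_exists q hq0 hq1 _ _
    _ = (∑ s : HyperSlot n k,
        ind (∃ x ∈ Tv, ∃ y ∈ Tv, x ≠ y ∧ x ∈ s.val ∧ y ∈ s.val)) * q := by
        simp only [Finset.card_singleton, pow_one]
        rw [← Finset.sum_mul]
    _ ≤ ((Tv.card : ℝ) * (Tv.card : ℝ) * (n : ℝ) ^ (k - 2)) * q :=
        mul_le_mul_of_nonneg_right (sum_slot_pair Tv Tv) hq0

lemma card_image_tuple {l : ℕ} {c : Fin l → HyperSlot n k} (hc : Function.Injective c) :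
    (Finset.image c Finset.univ).card = l := by
  rw [Finset.card_image_of_injective _ hc, Finset.card_univ, Fintype.card_fin]

lemma expect_badB {q : ℝ} (hq0 : 0 ≤ q) (hq1 : q ≤ 1) (Tv : Finset (Fin n))
    (r L : ℕ) :
    ∑ f : HyperSlot n k → Bool,
      mu q f * ind ((∃ (m : ℕ) (v : Fin (m + 1) → Fin n) (e : Fin m → Multiset (Fin n)),
          (hyperOf n k f).IsCycle m v e ∧
          ∀ (i : Fin m), ∀ u ∈ e i, distLE (hyperOf n k f).edges Tv r u) ∧
        ((Finset.univ.filter fun x : Fin n =>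
            distLE (hyperOf n k f).edges Tv r x).card ≤ L))
    ≤ ∑ j ∈ Finset.range (r+1), ∑ m' ∈ Finset.range L,
        ((((Tv.card : ℝ) * (n : ℝ) ^ (k - 1)) * ((k : ℝ) * (n : ℝ) ^ (k - 1)) ^ (j + m'))
          * ((k : ℝ) * (k : ℝ) * (n : ℝ) ^ (k - 2))) * q ^ (j + m' + 2) := by
  have step1 : ∀ f : HyperSlot n k → Bool,
      ind ((∃ (m : ℕ) (v : Fin (m + 1) → Fin n) (e : Fin m → Multiset (Fin n)),
          (hyperOf n k f).IsCycle m v e ∧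
          ∀ (i : Fin m), ∀ u ∈ e i, distLE (hyperOf n k f).edges Tv r u) ∧
        ((Finset.univ.filter fun x : Fin n =>
            distLE (hyperOf n k f).edges Tv r x).card ≤ L))
      ≤ ∑ j ∈ Finset.range (r+1), ∑ m' ∈ Finset.range L,
          ind (∃ c : Fin (j + m' + 2) → HyperSlot n k,
            StructB Tv j m' c ∧ ∀ s ∈ Finset.image c Finset.univ, f s = true) := by
    intro f
    by_cases h : (∃ (m : ℕ) (v : Fin (m + 1) → Fin n) (e : Fin m → Multiset (Fin n)),
          (hyperOf n k f).IsCycle m v e ∧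
          ∀ (i : Fin m), ∀ u ∈ e i, distLE (hyperOf n k f).edges Tv r u) ∧
        ((Finset.univ.filter fun x : Fin n =>
            distLE (hyperOf n k f).edges Tv r x).card ≤ L)
    · rw [ind_of h]
      obtain ⟨⟨m, v, e, hcyc, hall⟩, hball⟩ := h
      obtain ⟨j, hjr, m', hmL, c, hst, hpres⟩ := exists_Bcert hcyc hall hball
      have hpres' : ∀ s ∈ Finset.image c Finset.univ, f s = true := by
        intro s hs
        rw [Finset.mem_image] at hs
        obtain ⟨i, -, rfl⟩ := hs
        exact hpres i
      have hterm : (1:ℝ) ≤ ind (∃ c : Fin (j + m' + 2) → HyperSlot n k,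
          StructB Tv j m' c ∧ ∀ s ∈ Finset.image c Finset.univ, f s = true) := by
        rw [ind_of ⟨c, hst, hpres'⟩]
      calc (1:ℝ) ≤ ∑ m'' ∈ Finset.range L,
          ind (∃ c : Fin (j + m'' + 2) → HyperSlot n k,
            StructB Tv j m'' c ∧ ∀ s ∈ Finset.image c Finset.univ, f s = true) := by
            refine le_trans hterm ?_
            apply Finset.single_le_sum
              (f := fun m'' => ind (∃ c : Fin (j + m'' + 2) → HyperSlot n k,
                StructB Tv j m'' c ∧ ∀ s ∈ Finset.image c Finset.univ, f s = true))
              (fun i _ => ind_nonneg _)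
            rw [Finset.mem_range]
            omega
        _ ≤ _ := by
            apply Finset.single_le_sum
              (f := fun j' => ∑ m'' ∈ Finset.range L,
                ind (∃ c : Fin (j' + m'' + 2) → HyperSlot n k,
                  StructB Tv j' m'' c ∧ ∀ s ∈ Finset.image c Finset.univ, f s = true))
            · intro i _
              exact Finset.sum_nonneg fun i' _ => ind_nonneg _
            · rw [Finset.mem_range]
              omega
    · rw [ind_of_not h]
      exact Finset.sum_nonneg fun j _ => Finset.sum_nonneg fun m' _ => ind_nonneg _
  calc ∑ f : HyperSlot n k → Bool, mu q f * ind _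
      ≤ ∑ f : HyperSlot n k → Bool,
        mu q f * ∑ j ∈ Finset.range (r+1), ∑ m' ∈ Finset.range L,
          ind (∃ c : Fin (j + m' + 2) → HyperSlot n k,
            StructB Tv j m' c ∧ ∀ s ∈ Finset.image c Finset.univ, f s = true) :=
        Finset.sum_le_sum fun f _ =>
          mul_le_mul_of_nonneg_left (step1 f) (mu_nonneg hq0 hq1 f)
    _ = ∑ f : HyperSlot n k → Bool, ∑ j ∈ Finset.range (r+1), ∑ m' ∈ Finset.range L,
          mu q f * ind (∃ c : Fin (j + m' + 2) → HyperSlot n k,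
            StructB Tv j m' c ∧ ∀ s ∈ Finset.image c Finset.univ, f s = true) := by
        apply Finset.sum_congr rfl
        intro f _
        rw [Finset.mul_sum]
        apply Finset.sum_congr rfl
        intro j _
        rw [Finset.mul_sum]
    _ = ∑ j ∈ Finset.range (r+1), ∑ f : HyperSlot n k → Bool, ∑ m' ∈ Finset.range L,
          mu q f * ind (∃ c : Fin (j + m' + 2) → HyperSlot n k,
            StructB Tv j m' c ∧ ∀ s ∈ Finset.image c Finset.univ, f s = true) :=
        Finset.sum_comm
    _ = ∑ j ∈ Finset.range (r+1), ∑ m' ∈ Finset.range L,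
        ∑ f : HyperSlot n k → Bool,
          mu q f * ind (∃ c : Fin (j + m' + 2) → HyperSlot n k,
            StructB Tv j m' c ∧ ∀ s ∈ Finset.image c Finset.univ, f s = true) :=
        Finset.sum_congr rfl fun j _ => Finset.sum_comm
    _ ≤ _ := by
        apply Finset.sum_le_sum
        intro j _
        apply Finset.sum_le_sum
        intro m' _
        calc ∑ f : HyperSlot n k → Bool,
            mu q f * ind (∃ c : Fin (j + m' + 2) → HyperSlot n k,
              StructB Tv j m' c ∧ ∀ s ∈ Finset.image c Finset.univ, f s = true)
            ≤ ∑ c : Fin (j + m' + 2) → HyperSlot n k,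
              ind (StructB Tv j m' c) * q ^ (Finset.image c Finset.univ).card :=
              expect_exists q hq0 hq1 _ _
          _ ≤ ∑ c : Fin (j + m' + 2) → HyperSlot n k,
              ind (StructB Tv j m' c) * q ^ (j + m' + 2) := by
              apply Finset.sum_le_sum
              intro c _
              by_cases hst : StructB Tv j m' c
              · rw [card_image_tuple hst.2]
              · rw [ind_of_not hst, zero_mul, zero_mul]
          _ = (∑ c : Fin (j + m' + 2) → HyperSlot n k,
              ind (StructB Tv j m' c)) * q ^ (j + m' + 2) := by
              rw [← Finset.sum_mul]
          _ ≤ _ := by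
              apply mul_le_mul_of_nonneg_right (sum_structB Tv j m')
              positivity

lemma expect_badC {q : ℝ} (hq0 : 0 ≤ q) (hq1 : q ≤ 1) (Tv : Finset (Fin n))
    (r L : ℕ) :
    ((L : ℝ) + 1 - (Tv.card : ℝ)) * (∑ f : HyperSlot n k → Bool,
      mu q f * ind (¬ (Finset.univ.filter fun x : Fin n =>
          distLE (hyperOf n k f).edges Tv r x).card ≤ L))
    ≤ ∑ m' ∈ Finset.range r,
        ((((Tv.card : ℝ) * (n : ℝ) ^ (k - 1)) * ((k : ℝ) * (n : ℝ) ^ (k - 1)) ^ m') * (k : ℝ))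
          * q ^ (m' + 1) := by
  set X : (HyperSlot n k → Bool) → ℝ := fun f =>
    ∑ m' ∈ Finset.range r, ∑ cv : (Fin (m'+1) → HyperSlot n k) × Fin n,
      ind (StructW Tv m' cv ∧ ∀ s ∈ Finset.image cv.1 Finset.univ, f s = true) with hX
  have hpoint : ∀ f : HyperSlot n k → Bool,
      ((L : ℝ) + 1 - (Tv.card : ℝ)) * ind (¬ (Finset.univ.filter fun x : Fin n =>
          distLE (hyperOf n k f).edges Tv r x).card ≤ L) ≤ X f := by
    intro f
    have hXnn : 0 ≤ X f :=
      Finset.sum_nonneg fun m' _ => Finset.sum_nonneg fun cv _ => ind_nonneg _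
    by_cases h : (Finset.univ.filter fun x : Fin n =>
        distLE (hyperOf n k f).edges Tv r x).card ≤ L
    · rw [ind_of_not (not_not_intro h), mul_zero]
      exact hXnn
    · rw [ind_of h, mul_one]
      set ball := Finset.univ.filter fun x : Fin n =>
        distLE (hyperOf n k f).edges Tv r x with hball
      have h1 : L + 1 ≤ ball.card := by omega
      have h2 : ball.card ≤ (ball \ Tv).card + Tv.card :=
        Finset.card_le_card_sdiff_add_card
      have h3 : ((ball \ Tv).card : ℝ) ≤ X f := by
        rw [← sum_ind_mem_card (ball \ Tv)]
        have hinner : ∀ v : Fin n, ind (v ∈ ball \ Tv)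
            ≤ ∑ m' ∈ Finset.range r, ∑ c : Fin (m'+1) → HyperSlot n k,
              ind (StructW Tv m' (c, v)
                ∧ ∀ s ∈ Finset.image c Finset.univ, f s = true) := by
          intro v
          by_cases hv : v ∈ ball \ Tv
          · rw [ind_of hv]
            rw [Finset.mem_sdiff, hball, Finset.mem_filter] at hv
            obtain ⟨m', hm', c, hst, hpres⟩ := exists_Wcert hv.1.2 hv.2
            have hpres' : ∀ s ∈ Finset.image c Finset.univ, f s = true := by
              intro s hs
              rw [Finset.mem_image] at hs
              obtain ⟨i, -, rfl⟩ := hs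
              exact hpres i
            calc (1:ℝ) = ind (StructW Tv m' (c, v)
                ∧ ∀ s ∈ Finset.image c Finset.univ, f s = true) :=
                  (ind_of ⟨hst, hpres'⟩).symm
              _ ≤ ∑ c' : Fin (m'+1) → HyperSlot n k,
                  ind (StructW Tv m' (c', v)
                    ∧ ∀ s ∈ Finset.image c' Finset.univ, f s = true) :=
                  Finset.single_le_sum
                    (f := fun c' => ind (StructW Tv m' (c', v)
                      ∧ ∀ s ∈ Finset.image c' Finset.univ, f s = true))
                    (fun _ _ => ind_nonneg _) (Finset.mem_univ c)
              _ ≤ _ := by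
                  apply Finset.single_le_sum
                    (f := fun m'' => ∑ c' : Fin (m''+1) → HyperSlot n k,
                      ind (StructW Tv m'' (c', v)
                        ∧ ∀ s ∈ Finset.image c' Finset.univ, f s = true))
                    (fun _ _ => Finset.sum_nonneg fun _ _ => ind_nonneg _)
                  exact Finset.mem_range.2 hm'
          · rw [ind_of_not hv]
            exact Finset.sum_nonneg fun _ _ => Finset.sum_nonneg fun _ _ => ind_nonneg _
        calc ∑ v : Fin n, ind (v ∈ ball \ Tv)
            ≤ ∑ v : Fin n, ∑ m' ∈ Finset.range r, ∑ c : Fin (m'+1) → HyperSlot n k,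
              ind (StructW Tv m' (c, v)
                ∧ ∀ s ∈ Finset.image c Finset.univ, f s = true) :=
              Finset.sum_le_sum fun v _ => hinner v
          _ = ∑ m' ∈ Finset.range r, ∑ v : Fin n, ∑ c : Fin (m'+1) → HyperSlot n k,
              ind (StructW Tv m' (c, v)
                ∧ ∀ s ∈ Finset.image c Finset.univ, f s = true) := Finset.sum_comm
          _ = X f := by
              rw [hX]
              apply Finset.sum_congr rfl
              intro m' _
              rw [Fintype.sum_prod_type]
              exact Finset.sum_comm
      have h4 : ((L:ℝ) + 1) ≤ ((ball \ Tv).card : ℝ) + (Tv.card : ℝ) := by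
        have : ((L:ℝ) + 1) ≤ (ball.card : ℝ) := by exact_mod_cast h1
        have h2' : (ball.card : ℝ) ≤ ((ball \ Tv).card : ℝ) + (Tv.card : ℝ) := by
          exact_mod_cast h2
        linarith
      linarith
  calc ((L : ℝ) + 1 - (Tv.card : ℝ)) * (∑ f : HyperSlot n k → Bool,
      mu q f * ind (¬ (Finset.univ.filter fun x : Fin n =>
          distLE (hyperOf n k f).edges Tv r x).card ≤ L))
      = ∑ f : HyperSlot n k → Bool,
          mu q f * (((L : ℝ) + 1 - (Tv.card : ℝ)) * ind (¬ (Finset.univ.filter fun x : Fin n =>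
            distLE (hyperOf n k f).edges Tv r x).card ≤ L)) := by
        rw [Finset.mul_sum]
        apply Finset.sum_congr rfl
        intro f _
        ring
    _ ≤ ∑ f : HyperSlot n k → Bool, mu q f * X f :=
        Finset.sum_le_sum fun f _ =>
          mul_le_mul_of_nonneg_left (hpoint f) (mu_nonneg hq0 hq1 f)
    _ = ∑ m' ∈ Finset.range r, ∑ f : HyperSlot n k → Bool,
          mu q f * ∑ cv : (Fin (m'+1) → HyperSlot n k) × Fin n,
            ind (StructW Tv m' cv ∧ ∀ s ∈ Finset.image cv.1 Finset.univ, f s = true) := by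
        rw [hX]
        calc ∑ f : HyperSlot n k → Bool, mu q f * ∑ m' ∈ Finset.range r,
              ∑ cv : (Fin (m'+1) → HyperSlot n k) × Fin n,
                ind (StructW Tv m' cv ∧ ∀ s ∈ Finset.image cv.1 Finset.univ, f s = true)
            = ∑ f : HyperSlot n k → Bool, ∑ m' ∈ Finset.range r, mu q f *
              ∑ cv : (Fin (m'+1) → HyperSlot n k) × Fin n,
                ind (StructW Tv m' cv ∧ ∀ s ∈ Finset.image cv.1 Finset.univ, f s = true) := by
              apply Finset.sum_congr rfl
              intro f _
              rw [Finset.mul_sum]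
          _ = _ := Finset.sum_comm
    _ ≤ _ := by
        apply Finset.sum_le_sum
        intro m' _
        calc ∑ f : HyperSlot n k → Bool,
            mu q f * ∑ cv : (Fin (m'+1) → HyperSlot n k) × Fin n,
              ind (StructW Tv m' cv ∧ ∀ s ∈ Finset.image cv.1 Finset.univ, f s = true)
            = ∑ cv : (Fin (m'+1) → HyperSlot n k) × Fin n,
              ind (StructW Tv m' cv) * q ^ (Finset.image cv.1 Finset.univ).card :=
              expect_count q _ _
          _ ≤ ∑ cv : (Fin (m'+1) → HyperSlot n k) × Fin n,
              ind (StructW Tv m' cv) * q ^ (m' + 1) := by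
              apply Finset.sum_le_sum
              intro cv _
              by_cases hst : StructW Tv m' cv
              · rw [card_image_tuple hst.2]
              · rw [ind_of_not hst, zero_mul, zero_mul]
          _ = (∑ cv : (Fin (m'+1) → HyperSlot n k) × Fin n,
              ind (StructW Tv m' cv)) * q ^ (m' + 1) := by
              rw [← Finset.sum_mul]
          _ ≤ _ := by
              apply mul_le_mul_of_nonneg_right (sum_structW Tv m')
              positivity

lemma ind_not (P : Prop) : ind (¬ P) = 1 - ind P := by
  by_cases h : P
  · rw [ind_of_not (not_not_intro h), ind_of h]; ring
  · rw [ind_of h, ind_of_not h]; ring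

lemma ind_le_three {P Q R S : Prop} (h : P → Q ∨ R ∨ S) :
    ind P ≤ ind Q + ind R + ind S := by
  by_cases hp : P
  · rw [ind_of hp]
    have h0 := ind_nonneg Q
    have h1 := ind_nonneg R
    have h2 := ind_nonneg S
    rcases h hp with h'|h'|h' <;> rw [ind_of h'] <;> linarith
  · rw [ind_of_not hp]
    have h0 := ind_nonneg Q
    have h1 := ind_nonneg R
    have h2 := ind_nonneg S
    linarith

lemma ite_eq_ind (P : Prop) {inst : Decidable P} : (if P then (1:ℝ) else 0) = ind P := by
  by_cases h : P
  · simp [h, ind]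
  · simp [h, ind]

lemma localProb_nonneg (k t n : ℕ) (p : ℝ) (r L : ℕ) : 0 ≤ localProb k t n p r L := by
  unfold localProb
  apply Finset.sum_nonneg
  intro f _
  apply Finset.sum_nonneg
  intro T _
  have hc0 : (0:ℝ) ≤ clamp01 p := le_max_left _ _
  have hc1 : clamp01 p ≤ 1 := max_le zero_le_one (min_le_left _ _)
  apply mul_nonneg
  apply mul_nonneg
  · apply Finset.prod_nonneg
    intro s _
    split <;> linarith
  · positivity
  · split <;> norm_num

end Stmt9

open Stmt9

/-- The local structure lemma: for `k ≥ 2`, `t ≥ 1`, constants `c, ε > 0` and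
`p = p(n) ≤ c·n^(1-k)`, for every radius `r > 0` there is an `L` such that
for all sufficiently large `n`, with probability at least `1 - ε` the local
structure around a random `t`-set `T` in `G^k(n, p(n))` is good. -/
theorem stmt9 (k t : ℕ) (hk : 2 ≤ k) (ht : 1 ≤ t) (c ε : ℝ)
    (hc : 0 < c) (hε : 0 < ε) (p : ℕ → ℝ)
    (hp : ∀ n : ℕ, 1 ≤ n → p n ≤ c / (n : ℝ) ^ (k - 1)) :
    ∀ r : ℕ, 0 < r → ∃ L N : ℕ, ∀ n : ℕ, N ≤ n →
      1 - ε ≤ localProb k t n (p n) r L := by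
  intro r hr
  classical
  set D : ℝ := max 1 ((k:ℝ) * c) with hD
  have hD1 : 1 ≤ D := le_max_left _ _
  have hD0 : (0:ℝ) ≤ D := by linarith
  set M : ℝ := (r:ℝ) * (t:ℝ) * D ^ r with hM
  have hM0 : 0 ≤ M := by positivity
  set L : ℕ := t + Nat.ceil (2 * M / ε) + 1 with hL
  set KB : ℝ := (t:ℝ) * (t:ℝ) * c + ((r:ℝ)+1) * (L:ℝ) * ((t:ℝ) * D ^ (r + L + 1)) with hKB
  have hKB0 : 0 ≤ KB := by positivity
  set N : ℕ := max (max 1 t) (Nat.ceil (2 * KB / ε) + 1) with hN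
  refine ⟨L, N, ?_⟩
  intro n hn
  by_cases hε1 : 1 ≤ ε
  · have h0 := localProb_nonneg k t n (p n) r L
    linarith
  push_neg at hε1
  have hn1 : 1 ≤ n := le_trans (le_trans (le_max_left 1 t) (le_max_left _ _)) hn
  have hnt : t ≤ n := le_trans (le_trans (le_max_right 1 t) (le_max_left _ _)) hn
  have hnR : (1:ℝ) ≤ (n:ℝ) := by exact_mod_cast hn1
  have hnR0 : (0:ℝ) < (n:ℝ) := by linarith
  have hKBn : 2 * KB / ε ≤ (n:ℝ) := by
    have hnceil : (Nat.ceil (2*KB/ε) + 1 : ℕ) ≤ n := le_trans (le_max_right _ _) hn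
    calc 2*KB/ε ≤ (Nat.ceil (2*KB/ε) : ℝ) := Nat.le_ceil _
      _ ≤ n := by exact_mod_cast (by omega : Nat.ceil (2*KB/ε) ≤ n)
  have hKBhalf : KB / (n:ℝ) ≤ ε / 2 := by
    rw [div_le_div_iff₀ hnR0 (by norm_num : (0:ℝ) < 2)]
    have h2 : 2*KB ≤ (n:ℝ) * ε := (div_le_iff₀ hε).1 hKBn
    linarith
  set q := clamp01 (p n) with hq
  have hq0 : (0:ℝ) ≤ q := le_max_left _ _
  have hq1 : q ≤ 1 := max_le zero_le_one (min_le_left _ _)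
  have hnpow : (0:ℝ) < (n:ℝ)^(k-1) := by positivity
  have hqc : (n:ℝ)^(k-1) * q ≤ c := by
    have h1 : q ≤ c / (n:ℝ)^(k-1) := by
      rw [hq]
      unfold clamp01
      apply max_le
      · positivity
      · exact le_trans (min_le_right _ _) (hp n hn1)
    calc (n:ℝ)^(k-1) * q ≤ (n:ℝ)^(k-1) * (c / (n:ℝ)^(k-1)) :=
        mul_le_mul_of_nonneg_left h1 (le_of_lt hnpow)
      _ = c := by field_simp
  have hpow21 : (n:ℝ)^(k-2) * (n:ℝ) = (n:ℝ)^(k-1) := by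
    rw [← pow_succ]
    congr 1
    omega
  have hbase0 : (0:ℝ) ≤ (k:ℝ) * ((n:ℝ)^(k-1) * q) := by positivity
  have hbaseD : (k:ℝ) * ((n:ℝ)^(k-1) * q) ≤ D := by
    calc (k:ℝ) * ((n:ℝ)^(k-1) * q) ≤ (k:ℝ) * c :=
        mul_le_mul_of_nonneg_left hqc (by positivity)
      _ ≤ D := le_max_right _ _
  -- bound for the W sum
  have hWsum : ∑ m' ∈ Finset.range r,
      ((((t:ℝ) * (n:ℝ)^(k-1)) * ((k:ℝ)*(n:ℝ)^(k-1))^m') * (k:ℝ)) * q^(m'+1) ≤ M := by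
    calc ∑ m' ∈ Finset.range r,
        ((((t:ℝ) * (n:ℝ)^(k-1)) * ((k:ℝ)*(n:ℝ)^(k-1))^m') * (k:ℝ)) * q^(m'+1)
        ≤ ∑ _m' ∈ Finset.range r, (t:ℝ) * D^r := by
          apply Finset.sum_le_sum
          intro m' hm'
          have hident : ((((t:ℝ) * (n:ℝ)^(k-1)) * ((k:ℝ)*(n:ℝ)^(k-1))^m') * (k:ℝ)) * q^(m'+1)
              = (t:ℝ) * ((k:ℝ) * ((n:ℝ)^(k-1) * q))^(m'+1) := by
            rw [mul_pow, mul_pow, mul_pow]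
            ring
          rw [hident]
          apply mul_le_mul_of_nonneg_left _ (by positivity : (0:ℝ) ≤ (t:ℝ))
          calc ((k:ℝ) * ((n:ℝ)^(k-1) * q))^(m'+1) ≤ D^(m'+1) :=
              pow_le_pow_left₀ hbase0 hbaseD _
            _ ≤ D^r := by
              apply pow_le_pow_right₀ hD1
              rw [Finset.mem_range] at hm'
              omega
      _ = M := by
          rw [Finset.sum_const, Finset.card_range, nsmul_eq_mul, hM]
          ring
  -- bound for the B sum
  have hBsum : ∑ j ∈ Finset.range (r+1), ∑ m' ∈ Finset.range L,
      ((((t:ℝ) * (n : ℝ) ^ (k - 1)) * ((k : ℝ) * (n : ℝ) ^ (k - 1)) ^ (j + m'))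
        * ((k : ℝ) * (k : ℝ) * (n : ℝ) ^ (k - 2))) * q ^ (j + m' + 2)
      ≤ ((r:ℝ)+1) * (L:ℝ) * ((t:ℝ) * D ^ (r + L + 1)) / n := by
    have hterm : ∀ j ∈ Finset.range (r+1), ∀ m' ∈ Finset.range L,
        ((((t:ℝ) * (n : ℝ) ^ (k - 1)) * ((k : ℝ) * (n : ℝ) ^ (k - 1)) ^ (j + m'))
          * ((k : ℝ) * (k : ℝ) * (n : ℝ) ^ (k - 2))) * q ^ (j + m' + 2)
        ≤ (t:ℝ) * D ^ (r + L + 1) / n := by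
      intro j hj m' hm'
      rw [Finset.mem_range] at hj hm'
      rw [le_div_iff₀ hnR0]
      have hident : (((((t:ℝ) * (n : ℝ) ^ (k - 1)) * ((k : ℝ) * (n : ℝ) ^ (k - 1)) ^ (j + m'))
            * ((k : ℝ) * (k : ℝ) * (n : ℝ) ^ (k - 2))) * q ^ (j + m' + 2)) * n
          = (t:ℝ) * (((k:ℝ) * (n : ℝ) ^ (k - 1))^(j + m' + 2) * q ^ (j + m' + 2))
              * (((n:ℝ)^(k-2) * (n:ℝ)) / (n:ℝ)^(k-1)) := by
        rw [mul_pow]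
        field_simp
        ring
      rw [hident, hpow21, div_self (ne_of_gt hnpow), mul_one, ← mul_pow]
      have h1 : ((k:ℝ) * (n : ℝ) ^ (k - 1) * q)^(j + m' + 2) ≤ D^(j + m' + 2) := by
        apply pow_le_pow_left₀ (by positivity)
        rw [mul_assoc]
        exact hbaseD
      calc (t:ℝ) * ((k:ℝ) * (n : ℝ) ^ (k - 1) * q)^(j + m' + 2)
          ≤ (t:ℝ) * D^(j + m' + 2) :=
            mul_le_mul_of_nonneg_left h1 (by positivity)
        _ ≤ (t:ℝ) * D^(r + L + 1) := by
            apply mul_le_mul_of_nonneg_left _ (by positivity : (0:ℝ) ≤ (t:ℝ))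
            apply pow_le_pow_right₀ hD1
            omega
    calc ∑ j ∈ Finset.range (r+1), ∑ m' ∈ Finset.range L,
        ((((t:ℝ) * (n : ℝ) ^ (k - 1)) * ((k : ℝ) * (n : ℝ) ^ (k - 1)) ^ (j + m'))
          * ((k : ℝ) * (k : ℝ) * (n : ℝ) ^ (k - 2))) * q ^ (j + m' + 2)
        ≤ ∑ _j ∈ Finset.range (r+1), ∑ _m' ∈ Finset.range L,
          (t:ℝ) * D ^ (r + L + 1) / n :=
          Finset.sum_le_sum fun j hj => Finset.sum_le_sum fun m' hm' => hterm j hj m' hm'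
      _ = ((r:ℝ)+1) * (L:ℝ) * ((t:ℝ) * D ^ (r + L + 1)) / n := by
          rw [Finset.sum_const, Finset.card_range, nsmul_eq_mul,
            Finset.sum_const, Finset.card_range, nsmul_eq_mul]
          push_cast
          ring
  -- the A term
  have hA : ((t:ℝ) * (t:ℝ) * (n:ℝ)^(k-2)) * q ≤ (t:ℝ) * (t:ℝ) * c / n := by
    rw [le_div_iff₀ hnR0]
    have hident : ((t:ℝ) * (t:ℝ) * (n:ℝ)^(k-2)) * q * n
        = (t:ℝ) * (t:ℝ) * (((n:ℝ)^(k-2) * (n:ℝ)) * q) := by ring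
    rw [hident, hpow21]
    apply mul_le_mul_of_nonneg_left hqc (by positivity)
  -- the L-t quantity
  have hLt : ((L:ℝ) + 1 - (t:ℝ)) = (Nat.ceil (2*M/ε) : ℝ) + 2 := by
    rw [hL]
    push_cast
    ring
  have hLpos : (0:ℝ) < (L:ℝ) + 1 - (t:ℝ) := by
    rw [hLt]
    positivity
  have hCdiv : M / ((L:ℝ) + 1 - (t:ℝ)) ≤ ε/2 := by
    rw [div_le_iff₀ hLpos, hLt]
    have h1 : 2*M/ε ≤ (Nat.ceil (2*M/ε):ℝ) := Nat.le_ceil _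
    have h2 : 2*M ≤ ε * (Nat.ceil (2*M/ε):ℝ) := by
      rw [mul_comm ε _]
      exact (div_le_iff₀ hε).1 h1
    nlinarith
  -- per-T bound on the bad probability
  have key : ∀ T : {T : Finset (Fin n) // T.card = t},
      ∑ f : HyperSlot n k → Bool, mu q f * ind (¬ LocalGood k t n r L f T) ≤ ε := by
    intro T
    have hsplit : ∀ f : HyperSlot n k → Bool, ind (¬ LocalGood k t n r L f T) ≤
        ind (¬ ∀ s : HyperSlot n k, f s = true → (s.val ∩ T.val).card ≤ 1)
        + ind ((∃ (m : ℕ) (v : Fin (m + 1) → Fin n) (e : Fin m → Multiset (Fin n)),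
            (hyperOf n k f).IsCycle m v e ∧
            ∀ (i : Fin m), ∀ u ∈ e i, distLE (hyperOf n k f).edges T.val r u) ∧
          ((Finset.univ.filter fun x : Fin n =>
              distLE (hyperOf n k f).edges T.val r x).card ≤ L))
        + ind (¬ (Finset.univ.filter fun x : Fin n =>
              distLE (hyperOf n k f).edges T.val r x).card ≤ L) := by
      intro f
      apply ind_le_three
      intro hng
      unfold LocalGood at hng
      by_cases h1 : ∀ s : HyperSlot n k, f s = true → (s.val ∩ T.val).card ≤ 1
      · by_cases h3 : (Finset.univ.filter fun x : Fin n =>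
            distLE (hyperOf n k f).edges T.val r x).card ≤ L
        · right; left
          refine ⟨?_, h3⟩
          by_contra h2
          exact hng ⟨h1, h2, h3⟩
        · right; right; exact h3
      · left; exact h1
    have hS1 : ∑ f : HyperSlot n k → Bool,
        mu q f * ind (¬ ∀ s : HyperSlot n k, f s = true → (s.val ∩ T.val).card ≤ 1)
        ≤ (t:ℝ) * (t:ℝ) * c / n := by
      have h := expect_badA (n := n) (k := k) hq0 hq1 T.val
      rw [T.2] at h
      exact le_trans h hA
    have hS2 : ∑ f : HyperSlot n k → Bool,
        mu q f * ind ((∃ (m : ℕ) (v : Fin (m + 1) → Fin n) (e : Fin m → Multiset (Fin n)),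
            (hyperOf n k f).IsCycle m v e ∧
            ∀ (i : Fin m), ∀ u ∈ e i, distLE (hyperOf n k f).edges T.val r u) ∧
          ((Finset.univ.filter fun x : Fin n =>
              distLE (hyperOf n k f).edges T.val r x).card ≤ L))
        ≤ ((r:ℝ)+1) * (L:ℝ) * ((t:ℝ) * D ^ (r + L + 1)) / n := by
      have h := expect_badB (n := n) (k := k) hq0 hq1 T.val r L
      rw [T.2] at h
      exact le_trans h hBsum
    have hS3 : ∑ f : HyperSlot n k → Bool,
        mu q f * ind (¬ (Finset.univ.filter fun x : Fin n =>
            distLE (hyperOf n k f).edges T.val r x).card ≤ L)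
        ≤ ε / 2 := by
      have h := expect_badC (n := n) (k := k) hq0 hq1 T.val r L
      rw [T.2] at h
      have h2 : ((L:ℝ) + 1 - (t:ℝ)) * (∑ f : HyperSlot n k → Bool,
          mu q f * ind (¬ (Finset.univ.filter fun x : Fin n =>
            distLE (hyperOf n k f).edges T.val r x).card ≤ L)) ≤ M :=
        le_trans h hWsum
      have h3 : ∑ f : HyperSlot n k → Bool,
          mu q f * ind (¬ (Finset.univ.filter fun x : Fin n =>
            distLE (hyperOf n k f).edges T.val r x).card ≤ L)
          ≤ M / ((L:ℝ) + 1 - (t:ℝ)) := by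
        rw [le_div_iff₀ hLpos]
        rw [mul_comm] at h2
        exact h2
      exact le_trans h3 hCdiv
    calc ∑ f : HyperSlot n k → Bool, mu q f * ind (¬ LocalGood k t n r L f T)
        ≤ ∑ f : HyperSlot n k → Bool, mu q f *
          (ind (¬ ∀ s : HyperSlot n k, f s = true → (s.val ∩ T.val).card ≤ 1)
          + ind ((∃ (m : ℕ) (v : Fin (m + 1) → Fin n) (e : Fin m → Multiset (Fin n)),
              (hyperOf n k f).IsCycle m v e ∧
              ∀ (i : Fin m), ∀ u ∈ e i, distLE (hyperOf n k f).edges T.val r u) ∧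
            ((Finset.univ.filter fun x : Fin n =>
                distLE (hyperOf n k f).edges T.val r x).card ≤ L))
          + ind (¬ (Finset.univ.filter fun x : Fin n =>
                distLE (hyperOf n k f).edges T.val r x).card ≤ L)) :=
          Finset.sum_le_sum fun f _ =>
            mul_le_mul_of_nonneg_left (hsplit f) (mu_nonneg hq0 hq1 f)
      _ = (∑ f : HyperSlot n k → Bool, mu q f *
            ind (¬ ∀ s : HyperSlot n k, f s = true → (s.val ∩ T.val).card ≤ 1))
          + (∑ f : HyperSlot n k → Bool, mu q f *
            ind ((∃ (m : ℕ) (v : Fin (m + 1) → Fin n) (e : Fin m → Multiset (Fin n)),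
              (hyperOf n k f).IsCycle m v e ∧
              ∀ (i : Fin m), ∀ u ∈ e i, distLE (hyperOf n k f).edges T.val r u) ∧
            ((Finset.univ.filter fun x : Fin n =>
                distLE (hyperOf n k f).edges T.val r x).card ≤ L)))
          + (∑ f : HyperSlot n k → Bool, mu q f *
            ind (¬ (Finset.univ.filter fun x : Fin n =>
                distLE (hyperOf n k f).edges T.val r x).card ≤ L)) := by
          simp only [mul_add, Finset.sum_add_distrib]
      _ ≤ (t:ℝ) * (t:ℝ) * c / n + ((r:ℝ)+1) * (L:ℝ) * ((t:ℝ) * D ^ (r + L + 1)) / n + ε/2 :=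
          add_le_add (add_le_add hS1 hS2) hS3
      _ = KB / n + ε/2 := by
          rw [hKB]
          ring
      _ ≤ ε/2 + ε/2 := by linarith
      _ = ε := by ring
  -- rewrite localProb
  have hrw : localProb k t n (p n) r L
      = ∑ T : {T : Finset (Fin n) // T.card = t}, ((n.choose t : ℝ))⁻¹
          * ∑ f : HyperSlot n k → Bool, mu q f * ind (LocalGood k t n r L f T) := by
    unfold localProb
    rw [Finset.sum_comm]
    apply Finset.sum_congr rfl
    intro T _
    rw [Finset.mul_sum]
    apply Finset.sum_congr rfl
    intro f _
    rw [ite_eq_ind]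
    unfold mu
    rw [← hq]
    ring
  have hchoose : ((n.choose t : ℝ)) ≠ 0 := by
    have := Nat.choose_pos hnt
    positivity
  have hsumT : ∑ _T : {T : Finset (Fin n) // T.card = t}, ((n.choose t : ℝ))⁻¹ = 1 := by
    rw [Finset.sum_const, Finset.card_univ, nsmul_eq_mul]
    have hcard : Fintype.card {T : Finset (Fin n) // T.card = t} = n.choose t := by
      rw [Fintype.card_finset_len, Fintype.card_fin]
    rw [hcard]
    exact mul_inv_cancel₀ hchoose
  have hinner : ∀ T : {T : Finset (Fin n) // T.card = t},
      1 - ε ≤ ∑ f : HyperSlot n k → Bool, mu q f * ind (LocalGood k t n r L f T) := by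
    intro T
    have hgood : ∑ f : HyperSlot n k → Bool, mu q f * ind (LocalGood k t n r L f T)
        = 1 - ∑ f : HyperSlot n k → Bool, mu q f * ind (¬ LocalGood k t n r L f T) := by
      have : ∀ f : HyperSlot n k → Bool,
          mu q f * ind (LocalGood k t n r L f T)
          = mu q f - mu q f * ind (¬ LocalGood k t n r L f T) := by
        intro f
        rw [ind_not]
        ring
      rw [Finset.sum_congr rfl fun f _ => this f, Finset.sum_sub_distrib, sum_mu]
    rw [hgood]
    have := key T
    linarith
  rw [hrw]
  calc (1:ℝ) - ε = ∑ _T : {T : Finset (Fin n) // T.card = t},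
        ((n.choose t : ℝ))⁻¹ * (1 - ε) := by
        rw [← Finset.sum_mul, hsumT, one_mul]
    _ ≤ ∑ T : {T : Finset (Fin n) // T.card = t}, ((n.choose t : ℝ))⁻¹
          * ∑ f : HyperSlot n k → Bool, mu q f * ind (LocalGood k t n r L f T) := by
        apply Finset.sum_le_sum
        intro T _
        apply mul_le_mul_of_nonneg_left (hinner T) (by positivity)

end
end

section
/- Every finite simple graph, each of whose connected components is a tree or is unicyclic, admits a proper coloring of its vertices with 3 colors such that every cycle of the graph contains vertices of at least 3 different colors (in particular, its acyclic chromatic number is at most 3). -/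
open SimpleGraph

/-- In an acyclic graph, two paths from the same source to adjacent targets
have lengths of different parity. -/
lemma stmt12_parity_lemma {V : Type} [DecidableEq V] {H : SimpleGraph V} (hH : H.IsAcyclic)
    {r a b : V} (p : H.Walk r a) (q : H.Walk r b) (hp : p.IsPath) (hq : q.IsPath)
    (hab : H.Adj a b) : q.length % 2 = (p.length + 1) % 2 := by
  by_cases hb : b ∈ p.support
  · have hdrop : (⟨p.dropUntil b hb, hp.dropUntil hb⟩ : H.Path b a)
        = SimpleGraph.Path.singleton hab.symm := hH.path_unique _ _
    have hlen1 : (p.dropUntil b hb).length = 1 := by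
      have := congrArg (fun x : H.Path b a => (x : H.Walk b a).length) hdrop
      simpa [SimpleGraph.Path.singleton] using this
    have htake : (⟨q, hq⟩ : H.Path r b) = ⟨p.takeUntil b hb, hp.takeUntil hb⟩ :=
      hH.path_unique _ _
    have hlen2 : q.length = (p.takeUntil b hb).length := by
      have := congrArg (fun x : H.Path r b => (x : H.Walk r b).length) htake
      simpa using this
    have hsum : (p.takeUntil b hb).length + (p.dropUntil b hb).length = p.length :=
      (SimpleGraph.Walk.length_append (p.takeUntil b hb) (p.dropUntil b hb)).symm.trans
        (congrArg SimpleGraph.Walk.length (p.take_spec hb))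
    omega
  · have hpath : (p.concat hab).IsPath := by
      rw [SimpleGraph.Walk.isPath_def, SimpleGraph.Walk.support_concat]
      exact List.Nodup.append ((SimpleGraph.Walk.isPath_def p).mp hp) (by simp)
        (by intro x hx hxb; simp only [List.mem_singleton] at hxb; exact hb (hxb ▸ hx))
    have heq : (⟨q, hq⟩ : H.Path r b) = ⟨p.concat hab, hpath⟩ := hH.path_unique _ _
    have := congrArg (fun x : H.Path r b => (x : H.Walk r b).length) heq
    simp only [SimpleGraph.Walk.length_concat] at this
    omega

/-- An acyclic graph admits a proper 2-coloring. -/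
lemma stmt12_exists_two_coloring {V : Type} {H : SimpleGraph V} (hH : H.IsAcyclic) :
    ∃ c : V → Bool, ∀ a b, H.Adj a b → c a ≠ c b := by
  classical
  have hre : ∀ v : V, H.Reachable (Quot.out (H.connectedComponentMk v)) v := by
    intro v
    exact ConnectedComponent.exact (Quot.out_eq _)
  refine ⟨fun v => decide (((hre v).some.toPath.1).length % 2 = 0), ?_⟩
  intro a b hab heq
  have hrab : (H.connectedComponentMk a) = (H.connectedComponentMk b) :=
    ConnectedComponent.sound hab.reachable
  have hr : Quot.out (H.connectedComponentMk a) = Quot.out (H.connectedComponentMk b) := by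
    rw [hrab]
  have hpar := stmt12_parity_lemma hH
    ((hre a).some.toPath.1)
    (((hre b).some.toPath.1).copy hr.symm rfl)
    ((hre a).some.toPath).2 (by rw [SimpleGraph.Walk.isPath_copy]; exact ((hre b).some.toPath).2)
    hab
  simp only [SimpleGraph.Walk.length_copy] at hpar
  simp only [decide_eq_decide] at heq
  omega

/-- The first two edges and the second and third vertices of a cycle. -/
lemma stmt12_cycle_facts {V : Type} {G : SimpleGraph V} {a : V} {c : G.Walk a a}
    (hc : c.IsCycle) :
    ∃ u2 : V, s(a, c.getVert 1) ∈ c.edges ∧ s(c.getVert 1, u2) ∈ c.edges ∧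
      u2 ≠ a ∧ G.Adj (c.getVert 1) u2 := by
  cases c with
  | nil => exact absurd rfl hc.ne_nil
  | @cons _ b1 _ h1 q =>
    cases q with
    | nil => exact absurd h1 (G.loopless.irrefl _)
    | @cons _ b2 _ h2 q' =>
      have hgv : (SimpleGraph.Walk.cons h1 (SimpleGraph.Walk.cons h2 q')).getVert 1 = b1 := by
        simp [SimpleGraph.Walk.getVert_cons_succ, SimpleGraph.Walk.getVert_zero]
      rw [hgv]
      refine ⟨b2, by simp, by simp, ?_, h2⟩
      intro hb2a
      cases q' with
      | nil =>
        have h3 := hc.three_le_length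
        simp at h3
      | @cons _ _ _ h3 q'' =>
        have hnd := hc.support_nodup
        subst hb2a
        simp [SimpleGraph.Walk.support_cons] at hnd

section stmt12aux

variable {V : Type} (G : SimpleGraph V)

/-- The connected component `K` contains a cycle (bundled with its base point). -/
def Stmt12Cyc (K : G.ConnectedComponent) : Prop :=
  ∃ p : (x : V) × G.Walk x x, p.2.IsCycle ∧ G.connectedComponentMk p.1 = K

/-- A choice of a cycle (with base point) in a component containing a cycle. -/
noncomputable def stmt12pick (K : G.ConnectedComponent) (h : Stmt12Cyc G K) :
    (x : V) × G.Walk x x := Classical.choose h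

lemma stmt12pick_spec (K : G.ConnectedComponent) (h : Stmt12Cyc G K) :
    (stmt12pick G K h).2.IsCycle ∧ G.connectedComponentMk (stmt12pick G K h).1 = K :=
  Classical.choose_spec h

lemma stmt12pick_congr {K K' : G.ConnectedComponent} (hKK : K = K') (h : Stmt12Cyc G K) :
    stmt12pick G K h = stmt12pick G K' (hKK ▸ h) := by subst hKK; rfl

/-- The set of removed edges: the first edge of each chosen cycle. -/
def stmt12Erem : Set (Sym2 V) :=
  {e | ∃ K, ∃ h : Stmt12Cyc G K,
    e = s((stmt12pick G K h).1, (stmt12pick G K h).2.getVert 1)}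

/-- `v` is the base point of the chosen cycle of its component. -/
def Stmt12SP (v : V) : Prop :=
  ∃ h : Stmt12Cyc G (G.connectedComponentMk v), (stmt12pick G _ h).1 = v

lemma stmt12sp_pick (K : G.ConnectedComponent) (h : Stmt12Cyc G K) :
    Stmt12SP G (stmt12pick G K h).1 := by
  have hK : G.connectedComponentMk (stmt12pick G K h).1 = K := (stmt12pick_spec G K h).2
  exact ⟨hK.symm ▸ h, by rw [← stmt12pick_congr G hK.symm h]⟩

lemma stmt12sp_eq {v : V} (hv : Stmt12SP G v) (h : Stmt12Cyc G (G.connectedComponentMk v)) :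
    (stmt12pick G _ h).1 = v := by
  obtain ⟨h', he⟩ := hv
  exact he

lemma stmt12_mem_Erem {x y : V} (hxy : s(x, y) ∈ stmt12Erem G) :
    Stmt12SP G x ∨ Stmt12SP G y := by
  obtain ⟨K, h, he⟩ := hxy
  rw [Sym2.eq_iff] at he
  rcases he with ⟨hx1, -⟩ | ⟨-, hy1⟩
  · exact Or.inl (hx1 ▸ stmt12sp_pick G K h)
  · exact Or.inr (hy1 ▸ stmt12sp_pick G K h)

end stmt12aux

/-- Every finite simple graph, each of whose connected components is a tree or
unicyclic (i.e. any two cycles lying in the same component coincide, where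
cycles are identified by their edge sets), admits a proper 3-coloring in which
every cycle receives at least 3 different colors.  In particular its acyclic
chromatic number is at most 3. -/
theorem stmt12 {V : Type} [Fintype V] (G : SimpleGraph V)
    (hcomp : ∀ (a b : V) (c : G.Walk a a) (c' : G.Walk b b),
      c.IsCycle → c'.IsCycle → G.Reachable a b → ∀ e, e ∈ c.edges ↔ e ∈ c'.edges) :
    ∃ col : V → Fin 3,
      (∀ a b : V, G.Adj a b → col a ≠ col b) ∧
      (∀ (a : V) (c : G.Walk a a), c.IsCycle →
        3 ≤ (c.support.map col).toFinset.card) := by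
  classical
  set G' := G.deleteEdges (stmt12Erem G) with hG'
  have hle : G' ≤ G := G.deleteEdges_le _
  -- G' is acyclic
  have hacyc : G'.IsAcyclic := by
    intro w c'' hc''
    have hcg : (c''.mapLe hle).IsCycle := (Walk.mapLe_isCycle hle).mpr hc''
    have hA : Stmt12Cyc G (G.connectedComponentMk w) := ⟨⟨w, c''.mapLe hle⟩, hcg, rfl⟩
    have hcyc := (stmt12pick_spec G _ hA).1
    have hKa := (stmt12pick_spec G _ hA).2
    obtain ⟨u2, he1, -, -, -⟩ := stmt12_cycle_facts hcyc
    have hreach : G.Reachable (stmt12pick G _ hA).1 w := ConnectedComponent.exact hKa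
    have he1' : s((stmt12pick G _ hA).1, (stmt12pick G _ hA).2.getVert 1)
        ∈ (c''.mapLe hle).edges :=
      (hcomp _ _ _ _ hcyc hcg hreach _).mp he1
    have hedges : (c''.mapLe hle).edges = c''.edges := by
      simp [Walk.mapLe, Walk.edges_map,
        show ⇑(Hom.mapSpanningSubgraphs hle) = id from rfl, Sym2.map_id']
    rw [hedges] at he1'
    have hmem : s((stmt12pick G _ hA).1, (stmt12pick G _ hA).2.getVert 1) ∈ stmt12Erem G :=
      ⟨_, hA, rfl⟩
    have hG'e := c''.edges_subset_edgeSet he1'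
    rw [hG', edgeSet_deleteEdges] at hG'e
    exact hG'e.2 hmem
  obtain ⟨c2, hc2⟩ := stmt12_exists_two_coloring hacyc
  refine ⟨fun v => if Stmt12SP G v then (2 : Fin 3) else (cond (c2 v) 0 1), ?_, ?_⟩
  · -- properness
    intro x y hxy heq
    by_cases hx : Stmt12SP G x <;> by_cases hy : Stmt12SP G y
    · -- both special: x = y, contradiction
      have hcc : G.connectedComponentMk x = G.connectedComponentMk y :=
        ConnectedComponent.sound hxy.reachable
      obtain ⟨hax, hpx⟩ := hx
      have : x = y := by
        rw [← hpx, stmt12pick_congr G hcc hax]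
        exact stmt12sp_eq G hy _
      exact hxy.ne this
    · simp only [if_pos hx, if_neg hy] at heq
      cases hcy : c2 y <;> rw [hcy] at heq <;> exact absurd heq (by decide)
    · simp only [if_pos hy, if_neg hx] at heq
      cases hcx : c2 x <;> rw [hcx] at heq <;> exact absurd heq (by decide)
    · have hG'adj : G'.Adj x y := by
        rw [hG', deleteEdges_adj]
        refine ⟨hxy, fun hmem => ?_⟩
        rcases stmt12_mem_Erem G hmem with h | h
        · exact hx h
        · exact hy h
      have hne := hc2 x y hG'adj
      simp only [if_neg hx, if_neg hy] at heq
      cases hcx : c2 x <;> cases hcy : c2 y <;> rw [hcx, hcy] at heq <;>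
        first
          | exact hne (hcx.trans hcy.symm)
          | exact absurd heq (by decide)
  · -- every cycle gets at least 3 colors
    intro v c' hc'
    have hA : Stmt12Cyc G (G.connectedComponentMk v) := ⟨⟨v, c'⟩, hc', rfl⟩
    have hcyc := (stmt12pick_spec G _ hA).1
    have hKa := (stmt12pick_spec G _ hA).2
    obtain ⟨u2, he1, he2, hu2a, hadj12⟩ := stmt12_cycle_facts hcyc
    have hreach : G.Reachable (stmt12pick G _ hA).1 v := ConnectedComponent.exact hKa
    have hiff := hcomp _ _ _ _ hcyc hc' hreach
    have he1' := (hiff _).mp he1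
    have he2' := (hiff _).mp he2
    have hma := c'.fst_mem_support_of_mem_edges he1'
    have hm1 := c'.snd_mem_support_of_mem_edges he1'
    have hm2 := c'.snd_mem_support_of_mem_edges he2'
    have hadj01 : G.Adj (stmt12pick G _ hA).1 ((stmt12pick G _ hA).2.getVert 1) :=
      (stmt12pick G _ hA).2.adj_of_mem_edges he1
    have hSPa : Stmt12SP G (stmt12pick G _ hA).1 := stmt12sp_pick G _ hA
    -- the second vertex is not special
    have hnot1 : ¬ Stmt12SP G ((stmt12pick G _ hA).2.getVert 1) := by
      intro hS
      have hc1 : G.connectedComponentMk ((stmt12pick G _ hA).2.getVert 1)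
          = G.connectedComponentMk v :=
        (ConnectedComponent.sound hadj01.symm.reachable).trans hKa
      have := stmt12sp_eq G hS (hc1.symm ▸ hA)
      rw [stmt12pick_congr G hc1 (hc1.symm ▸ hA)] at this
      exact hadj01.ne this
    -- the third vertex is not special
    have hnot2 : ¬ Stmt12SP G u2 := by
      intro hS
      have hc1 : G.connectedComponentMk u2 = G.connectedComponentMk v :=
        ((ConnectedComponent.sound hadj12.symm.reachable).trans
          (ConnectedComponent.sound hadj01.symm.reachable)).trans hKa
      have := stmt12sp_eq G hS (hc1.symm ▸ hA)
      rw [stmt12pick_congr G hc1 (hc1.symm ▸ hA)] at this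
      exact hu2a this.symm
    have hG'adj : G'.Adj ((stmt12pick G _ hA).2.getVert 1) u2 := by
      rw [hG', deleteEdges_adj]
      refine ⟨hadj12, fun hmem => ?_⟩
      rcases stmt12_mem_Erem G hmem with h | h
      · exact hnot1 h
      · exact hnot2 h
    have hcne := hc2 _ _ hG'adj
    set col : V → Fin 3 := fun v => if Stmt12SP G v then (2 : Fin 3) else (cond (c2 v) 0 1)
      with hcol
    have hcola : col (stmt12pick G _ hA).1 = 2 := by rw [hcol]; simp only [if_pos hSPa]
    have hcol1 : col ((stmt12pick G _ hA).2.getVert 1)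
        = cond (c2 ((stmt12pick G _ hA).2.getVert 1)) 0 1 := by
      rw [hcol]; simp only [if_neg hnot1]
    have hcol2 : col u2 = cond (c2 u2) 0 1 := by rw [hcol]; simp only [if_neg hnot2]
    have hd1 : col ((stmt12pick G _ hA).2.getVert 1) ≠ col (stmt12pick G _ hA).1 := by
      rw [hcola, hcol1]
      cases c2 ((stmt12pick G _ hA).2.getVert 1) <;> decide
    have hd2 : col u2 ≠ col (stmt12pick G _ hA).1 := by
      rw [hcola, hcol2]
      cases c2 u2 <;> decide
    have hd3 : col ((stmt12pick G _ hA).2.getVert 1) ≠ col u2 := by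
      rw [hcol1, hcol2]
      cases hcx : c2 ((stmt12pick G _ hA).2.getVert 1) <;> cases hcy : c2 u2 <;>
        first
          | exact absurd (hcx.trans hcy.symm) hcne
          | decide
    have hsub : ({col (stmt12pick G _ hA).1, col ((stmt12pick G _ hA).2.getVert 1), col u2} :
        Finset (Fin 3)) ⊆ (c'.support.map col).toFinset := by
      intro t ht
      simp only [Finset.mem_insert, Finset.mem_singleton] at ht
      rw [List.mem_toFinset]
      rcases ht with rfl | rfl | rfl
      · exact List.mem_map_of_mem (f := col) hma
      · exact List.mem_map_of_mem (f := col) hm1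
      · exact List.mem_map_of_mem (f := col) hm2
    have hcard : ({col (stmt12pick G _ hA).1, col ((stmt12pick G _ hA).2.getVert 1), col u2} :
        Finset (Fin 3)).card = 3 := by
      rw [Finset.card_insert_of_notMem (by
        simp only [Finset.mem_insert, Finset.mem_singleton]
        push_neg
        exact ⟨fun h => hd1 h.symm, fun h => hd2 h.symm⟩)]
      rw [Finset.card_insert_of_notMem (by simpa using hd3), Finset.card_singleton]
    calc 3 = _ := hcard.symm
      _ ≤ _ := Finset.card_le_card hsub
end
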